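/- arXiv:0710.2496 — 6 statements merged into one kernel-verified Lean document; each statement's English description precedes it below -/
import Mathlib

section
/- Let (X_1,Y_1), (X_2,Y_2), … be a stationary sequence of ℝ×ℝ-valued random variables with E|Y_1| < ∞. Then with probability one the sample path ((X_1,Y_1),(X_2,Y_2),…) is stable: for every t ∈ ℝ, the empirical quantities (1/n)∑_{i=1}^n 1{X_i ≤ t}, (1/n)∑_{i=1}^n 1{X_i = t}, (1/n)∑_{i=1}^n Y_i·1{X_i ≤ t}, and (1/n)∑_{i=1}^n Y_i·1{X_i = t} all converge almost surely (namely, to the conditional expectations E[1{X_1 ≤ t} | ℰ], E[1{X_1 = t} | ℰ], E[Y_1·1{X_1 ≤ t} | ℰ], and E[Y_1·1{X_1 = t} | ℰ], where ℰ is the invariant σ-algebra of the shift). -/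
open MeasureTheory Filter Set Topology

set_option linter.unusedSectionVars false
set_option maxHeartbeats 1000000

noncomputable section

namespace BirkhoffAux

variable {α : Type*} [m0 : MeasurableSpace α] {μ : Measure α} [IsProbabilityMeasure μ]
variable {T : α → α} {f : α → ℝ}

/-- Maximum of the Birkhoff sums `S_0 = 0, S_1, …, S_N`. -/
def maxBS (T : α → α) (f : α → ℝ) : ℕ → α → ℝ
  | 0 => fun _ => 0
  | (N + 1) => fun x => max (maxBS T f N x) (birkhoffSum T f (N + 1) x)

lemma maxBS_nonneg (T : α → α) (f : α → ℝ) (N : ℕ) (x : α) : 0 ≤ maxBS T f N x := by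
  induction N with
  | zero => simp [maxBS]
  | succ N ih => exact le_trans ih (le_max_left _ _)

lemma maxBS_mono (T : α → α) (f : α → ℝ) {M N : ℕ} (h : M ≤ N) (x : α) :
    maxBS T f M x ≤ maxBS T f N x := by
  induction N with
  | zero => simp_all
  | succ N ih =>
    rcases Nat.lt_or_ge M (N + 1) with h' | h'
    · exact le_trans (ih (Nat.lt_succ_iff.mp h')) (le_max_left _ _)
    · have : M = N + 1 := le_antisymm h h'
      simp [this]

lemma birkhoffSum_le_maxBS (T : α → α) (f : α → ℝ) {k N : ℕ} (h : k ≤ N) (x : α) :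
    birkhoffSum T f k x ≤ maxBS T f N x := by
  induction N with
  | zero =>
    have : k = 0 := Nat.le_zero.mp h
    simp [this, maxBS, birkhoffSum]
  | succ N ih =>
    rcases Nat.lt_or_ge k (N + 1) with h' | h'
    · exact le_trans (ih (Nat.lt_succ_iff.mp h')) (le_max_left _ _)
    · have : k = N + 1 := le_antisymm h h'
      subst this
      exact le_max_right _ _

lemma exists_maxBS (T : α → α) (f : α → ℝ) {N : ℕ} {x : α} (h : 0 < maxBS T f N x) :
    ∃ k, 1 ≤ k ∧ k ≤ N ∧ maxBS T f N x = birkhoffSum T f k x := by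
  induction N with
  | zero => simp [maxBS] at h
  | succ N ih =>
    rcases le_total (birkhoffSum T f (N + 1) x) (maxBS T f N x) with h' | h'
    · have hmax : maxBS T f (N + 1) x = maxBS T f N x := max_eq_left h'
      rw [hmax] at h ⊢
      obtain ⟨k, hk1, hkN, hke⟩ := ih h
      exact ⟨k, hk1, hkN.trans (Nat.le_succ N), hke⟩
    · have hmax : maxBS T f (N + 1) x = birkhoffSum T f (N + 1) x := max_eq_right h'
      exact ⟨N + 1, Nat.succ_le_succ (Nat.zero_le N), le_rfl, hmax⟩

lemma measurable_birkhoffSum (hT : Measurable T) (hfm : Measurable f) (n : ℕ) :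
    Measurable (birkhoffSum T f n) := by
  unfold birkhoffSum
  exact Finset.measurable_sum _ fun k _ => hfm.comp (hT.iterate k)

lemma integrable_birkhoffSum (hTμ : MeasurePreserving T μ μ) (hf : Integrable f μ) (n : ℕ) :
    Integrable (birkhoffSum T f n) μ := by
  unfold birkhoffSum
  exact integrable_finset_sum _ fun k _ =>
    ((hTμ.iterate k).integrable_comp hf.aestronglyMeasurable).mpr hf

lemma integrable_max' {g h : α → ℝ} (hg : Integrable g μ) (hh : Integrable h μ) :
    Integrable (fun x => max (g x) (h x)) μ := by
  exact hg.sup hh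

lemma measurable_maxBS (hT : Measurable T) (hfm : Measurable f) (N : ℕ) :
    Measurable (maxBS T f N) := by
  induction N with
  | zero => exact measurable_const
  | succ N ih => exact ih.max (measurable_birkhoffSum hT hfm (N + 1))

lemma integrable_maxBS (hTμ : MeasurePreserving T μ μ) (hf : Integrable f μ) (N : ℕ) :
    Integrable (maxBS T f N) μ := by
  induction N with
  | zero => exact integrable_const 0
  | succ N ih => exact integrable_max' ih (integrable_birkhoffSum hTμ hf (N + 1))


theorem maximal_ergodic (hT : Measurable T) (hTμ : MeasurePreserving T μ μ)
    (hfm : Measurable f) (hf : Integrable f μ) (N : ℕ) :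
    0 ≤ ∫ x in {x | 0 < maxBS T f N x}, f x ∂μ := by
  set M := maxBS T f N with hM
  set A := {x | 0 < M x} with hA
  have hAm : MeasurableSet A := measurableSet_lt measurable_const (measurable_maxBS hT hfm N)
  have hMi : Integrable M μ := integrable_maxBS hTμ hf N
  have hMTi : Integrable (fun x => M (T x)) μ :=
    (hTμ.integrable_comp hMi.aestronglyMeasurable).mpr hMi
  have key : ∀ x ∈ A, M x - M (T x) ≤ f x := by
    intro x hx
    obtain ⟨k, hk1, hkN, hke⟩ := exists_maxBS T f hx
    obtain ⟨j, rfl⟩ : ∃ j, k = j + 1 := ⟨k - 1, (Nat.succ_pred_eq_of_pos hk1).symm⟩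
    have hj : j ≤ N := Nat.le_of_succ_le hkN
    have h1 : birkhoffSum T f j (T x) ≤ M (T x) := birkhoffSum_le_maxBS T f hj (T x)
    have h2 : M x = f x + birkhoffSum T f j (T x) := by
      show maxBS T f N x = _
      rw [hke, birkhoffSum_succ' T f j x]
    linarith
  have hsub : ∫ x in A, (M x - M (T x)) ∂μ ≤ ∫ x in A, f x ∂μ :=
    setIntegral_mono_on ((hMi.sub hMTi).integrableOn) hf.integrableOn hAm key
  have heq1 : ∫ x in A, (M x - M (T x)) ∂μ = ∫ x in A, M x ∂μ - ∫ x in A, M (T x) ∂μ :=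
    integral_sub hMi.integrableOn hMTi.integrableOn
  have heq2 : ∫ x in A, M x ∂μ = ∫ x, M x ∂μ :=
    setIntegral_eq_integral_of_forall_compl_eq_zero fun x hx =>
      le_antisymm (not_lt.mp hx) (maxBS_nonneg T f N x)
  have hle3 : ∫ x in A, M (T x) ∂μ ≤ ∫ x, M (T x) ∂μ :=
    setIntegral_le_integral hMTi (ae_of_all _ fun x => maxBS_nonneg T f N (T x))
  have heq4 : ∫ x, M (T x) ∂μ = ∫ x, M x ∂μ := by
    conv_rhs => rw [← hTμ.map_eq]
    rw [integral_map hT.aemeasurable]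
    · rw [hTμ.map_eq]
      exact hMi.aestronglyMeasurable
  linarith

theorem maximal_ergodic_inter (hT : Measurable T) (hTμ : MeasurePreserving T μ μ)
    (hfm : Measurable f) (hf : Integrable f μ) {B : Set α} (hBm : MeasurableSet B)
    (hBi : T ⁻¹' B = B) (N : ℕ) :
    0 ≤ ∫ x in {x | 0 < maxBS T f N x} ∩ B, f x ∂μ := by
  have hmem : ∀ (x : α) (i : ℕ), (T^[i] x ∈ B ↔ x ∈ B) := by
    intro x i
    induction i generalizing x with
    | zero => simp
    | succ i ih =>
      rw [Function.iterate_succ_apply]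
      rw [ih (T x)]
      exact ⟨fun h => by rw [← hBi]; exact h, fun h => by rw [← hBi] at h; exact h⟩
  set fB := B.indicator f with hfB
  have hS : ∀ (n : ℕ) (x : α), birkhoffSum T fB n x = B.indicator (birkhoffSum T f n) x := by
    intro n x
    by_cases hx : x ∈ B
    · rw [Set.indicator_of_mem hx]
      unfold birkhoffSum
      refine Finset.sum_congr rfl fun k _ => ?_
      rw [hfB, Set.indicator_of_mem ((hmem x k).mpr hx)]
    · rw [Set.indicator_of_notMem hx]
      unfold birkhoffSum
      refine Finset.sum_eq_zero fun k _ => ?_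
      rw [hfB, Set.indicator_of_notMem (fun h => hx ((hmem x k).mp h))]
  have hMB : ∀ (N : ℕ) (x : α), maxBS T fB N x = B.indicator (maxBS T f N) x := by
    intro N x
    induction N with
    | zero => by_cases hx : x ∈ B <;> simp [maxBS, Set.indicator_apply, hx]
    | succ N ih =>
      by_cases hx : x ∈ B
      · simp only [maxBS, ih, hS, Set.indicator_of_mem hx]
      · simp only [maxBS, ih, hS, Set.indicator_of_notMem hx, max_self]
  have hset : {x | 0 < maxBS T fB N x} = {x | 0 < maxBS T f N x} ∩ B := by
    ext x
    by_cases hx : x ∈ B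
    · simp [hMB, Set.indicator_of_mem hx, hx]
    · simp [hMB, Set.indicator_of_notMem hx, hx]
  have h0 := maximal_ergodic hT hTμ (hfm.indicator hBm) (hf.indicator hBm) N
  rw [hset] at h0
  rw [show (fun x => fB x) = fB from rfl] at h0
  calc (0:ℝ) ≤ ∫ x in {x | 0 < maxBS T f N x} ∩ B, fB x ∂μ := h0
    _ = ∫ x in ({x | 0 < maxBS T f N x} ∩ B) ∩ B, f x ∂μ := setIntegral_indicator hBm
    _ = ∫ x in {x | 0 < maxBS T f N x} ∩ B, f x ∂μ := by rw [Set.inter_assoc, Set.inter_self]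


theorem birkhoff_onesided (hT : Measurable T) (hTμ : MeasurePreserving T μ μ)
    (hfm : Measurable f) (hf : Integrable f μ) {g : α → ℝ} (hgm : Measurable g)
    (hgi : Integrable g μ) (hgT : ∀ x, g (T x) = g x)
    (hgint : ∀ B : Set α, MeasurableSet B → T ⁻¹' B = B → ∫ x in B, g x ∂μ = ∫ x in B, f x ∂μ)
    {ε : ℝ} (hε : 0 < ε) :
    ∀ᵐ x ∂μ, ∀ᶠ n in atTop, birkhoffSum T f n x / n ≤ g x + 2 * ε := by
  have hgiter : ∀ (i : ℕ) (x : α), g (T^[i] x) = g x := by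
    intro i
    induction i with
    | zero => intro x; rfl
    | succ i ih => intro x; rw [Function.iterate_succ_apply, ih, hgT]
  set φ : α → ℝ := fun x => f x - g x - ε with hφ
  have hφm : Measurable φ := (hfm.sub hgm).sub measurable_const
  have hφi : Integrable φ μ := (hf.sub hgi).sub (integrable_const ε)
  set u : ℕ → α → ℝ := fun n x => birkhoffSum T φ n x / n with hu
  have hum : ∀ n, Measurable (u n) := fun n => (measurable_birkhoffSum hT hφm n).div_const _
  have hSφ : ∀ (n : ℕ) (x : α), birkhoffSum T φ n x = birkhoffSum T f n x - n * g x - n * ε := by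
    intro n x
    unfold birkhoffSum
    simp only [hφ, hgiter]
    rw [Finset.sum_sub_distrib, Finset.sum_sub_distrib, Finset.sum_const, Finset.sum_const,
      Finset.card_range]
    simp [nsmul_eq_mul]
  set P : α → Prop := fun x => ∀ δ : ℝ, 0 < δ → ∀ᶠ n in atTop, u n x ≤ δ with hP
  have hrec : ∀ (n : ℕ) (x : α), birkhoffSum T φ n (T x) = birkhoffSum T φ (n + 1) x - φ x := by
    intro n x; rw [birkhoffSum_succ' T φ n x]; ring
  have hPT : ∀ x, P x ↔ P (T x) := by
    intro x
    constructor
    · intro hPx δ hδ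
      have h1 : ∀ᶠ n : ℕ in atTop, u (n + 1) x ≤ δ / 4 := by
        obtain ⟨N, hN⟩ := eventually_atTop.mp (hPx (δ / 4) (by linarith))
        exact eventually_atTop.mpr ⟨N, fun n hn => hN (n + 1) (hn.trans (Nat.le_succ n))⟩
      have h2 : ∀ᶠ n : ℕ in atTop, |φ x| / n ≤ δ / 2 :=
        (tendsto_const_div_atTop_nhds_zero_nat |φ x|).eventually
          (eventually_le_nhds (by linarith : (0:ℝ) < δ / 2))
      filter_upwards [h1, h2, eventually_ge_atTop 1] with n hn1 hn2 hn3
      have hn0 : (0:ℝ) < n := by exact_mod_cast hn3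
      have h1n : (1:ℝ) ≤ n := by exact_mod_cast hn3
      have hS : birkhoffSum T φ n (T x) = ((n:ℝ) + 1) * u (n + 1) x - φ x := by
        rw [hrec n x]
        simp only [hu]
        push_cast
        field_simp
      show u n (T x) ≤ δ
      simp only [hu] at hn1 ⊢
      rw [div_le_iff₀ hn0, hS]
      have hb2 : |φ x| ≤ δ / 2 * n := (div_le_iff₀ hn0).mp hn2
      have hbound : -φ x ≤ |φ x| := neg_le_abs _
      have ha : ((n:ℝ) + 1) * u (n + 1) x ≤ ((n:ℝ) + 1) * (δ / 4) := by
        apply mul_le_mul_of_nonneg_left _ (by positivity)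
        simpa only [hu] using hn1
      simp only [hu] at ha
      nlinarith
    · intro hPx δ hδ
      have h1 : ∀ᶠ n : ℕ in atTop, u n (T x) ≤ δ / 2 := hPx (δ / 2) (by linarith)
      have h2 : ∀ᶠ n : ℕ in atTop, |φ x| / ((n:ℝ) + 1) ≤ δ / 2 := by
        have h := (tendsto_const_div_atTop_nhds_zero_nat |φ x|).comp (tendsto_add_atTop_nat 1)
        have h' := h.eventually (eventually_le_nhds (by linarith : (0:ℝ) < δ / 2))
        simpa [Function.comp, Nat.cast_add] using h'
      have hkey : ∀ᶠ n : ℕ in atTop, u (n + 1) x ≤ δ := by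
        filter_upwards [h1, h2] with n hn1 hn2
        have hn1' : birkhoffSum T φ n (T x) ≤ δ / 2 * n := by
          rcases Nat.eq_zero_or_pos n with rfl | hn
          · simp [birkhoffSum]
          · have hn0 : (0:ℝ) < n := by exact_mod_cast hn
            simp only [hu] at hn1
            calc birkhoffSum T φ n (T x) = birkhoffSum T φ n (T x) / n * n := by field_simp
              _ ≤ δ / 2 * n := mul_le_mul_of_nonneg_right hn1 hn0.le
        have hs : birkhoffSum T φ (n + 1) x = φ x + birkhoffSum T φ n (T x) :=
          birkhoffSum_succ' T φ n x
        have hφb : φ x ≤ |φ x| := le_abs_self _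
        have h2' : |φ x| ≤ δ / 2 * ((n:ℝ) + 1) := (div_le_iff₀ (by positivity)).mp hn2
        show u (n + 1) x ≤ δ
        simp only [hu]
        push_cast
        rw [div_le_iff₀ (by positivity : (0:ℝ) < (n:ℝ) + 1), hs]
        nlinarith [Nat.cast_nonneg (α := ℝ) n]
      obtain ⟨N, hN⟩ := eventually_atTop.mp hkey
      refine eventually_atTop.mpr ⟨N + 1, fun n hn => ?_⟩
      obtain ⟨m, rfl⟩ : ∃ m, n = m + 1 := ⟨n - 1, (Nat.succ_pred_eq_of_pos (by omega)).symm⟩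
      exact hN m (by omega)
  have hPiff : ∀ x, P x ↔ ∀ q : ℚ, 0 < q → ∀ᶠ n in atTop, u n x ≤ (q:ℝ) := by
    intro x
    constructor
    · intro h q hq; exact h q (by exact_mod_cast hq)
    · intro h δ hδ
      obtain ⟨q, hq0, hqδ⟩ := exists_rat_btwn hδ
      exact (h q (by exact_mod_cast hq0)).mono fun n hn => hn.trans hqδ.le
  have hSm : MeasurableSet {x | P x} := by
    have hrw : {x | P x} = ⋂ (q : ℚ), ⋂ (_ : 0 < q), ⋃ (N : ℕ), ⋂ (n : ℕ), ⋂ (_ : N ≤ n),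
        {x | u n x ≤ (q:ℝ)} := by
      ext x
      simp only [mem_iInter, mem_iUnion, mem_setOf_eq, hPiff x, eventually_atTop]
    rw [hrw]
    exact MeasurableSet.iInter fun q => MeasurableSet.iInter fun _ =>
      MeasurableSet.iUnion fun N => MeasurableSet.iInter fun n => MeasurableSet.iInter fun _ =>
        measurableSet_le (hum n) measurable_const
  set B := {x | P x}ᶜ with hB
  have hBm : MeasurableSet B := hSm.compl
  have hSinv : T ⁻¹' {x | P x} = {x | P x} := by
    ext x
    simp only [mem_preimage, mem_setOf_eq]
    exact (hPT x).symm
  have hBinv : T ⁻¹' B = B := by rw [hB, preimage_compl, hSinv]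
  have hBsub : B ⊆ ⋃ N, {x | 0 < maxBS T φ N x} := by
    intro x hx
    simp only [hB, mem_compl_iff, mem_setOf_eq, hP] at hx
    push_neg at hx
    obtain ⟨δ, hδ, hfreq⟩ := hx
    have hfreq : ∃ᶠ n in atTop, ¬ (u n x ≤ δ) := by simpa only [not_le] using hfreq
    obtain ⟨n, hn, hn1⟩ := (hfreq.and_eventually (eventually_ge_atTop 1)).exists
    push_neg at hn
    have hn0 : (0:ℝ) < n := by exact_mod_cast hn1
    have hupos : 0 < u n x := lt_trans hδ hn
    have hpos : 0 < birkhoffSum T φ n x := by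
      simp only [hu] at hupos
      have := mul_pos hupos hn0
      rwa [div_mul_cancel₀ _ (ne_of_gt hn0)] at this
    exact mem_iUnion.mpr ⟨n, lt_of_lt_of_le hpos (birkhoffSum_le_maxBS T φ le_rfl x)⟩
  set s : ℕ → Set α := fun N => {x | 0 < maxBS T φ N x} ∩ B with hs
  have hsm : ∀ N, MeasurableSet (s N) := fun N =>
    (measurableSet_lt measurable_const (measurable_maxBS hT hφm N)).inter hBm
  have hmono : Monotone s := fun M N h =>
    inter_subset_inter_left _ fun x hx => lt_of_lt_of_le hx (maxBS_mono T φ h x)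
  have hUnion : ⋃ N, s N = B := by
    simp only [hs, ← iUnion_inter]
    exact inter_eq_right.mpr hBsub
  have htend := tendsto_setIntegral_of_monotone hsm hmono hφi.integrableOn
  rw [hUnion] at htend
  have hpos : 0 ≤ ∫ x in B, φ x ∂μ :=
    ge_of_tendsto' htend fun N => maximal_ergodic_inter hT hTμ hφm hφi hBm hBinv N
  have hint : ∫ x in B, φ x ∂μ
      = ∫ x in B, f x ∂μ - ∫ x in B, g x ∂μ - (μ B).toReal * ε := by
    simp only [hφ]
    have hfg : Integrable (fun x => f x - g x) μ := hf.sub hgi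
    rw [integral_sub hfg.integrableOn (integrable_const ε).integrableOn,
      integral_sub hf.integrableOn hgi.integrableOn, setIntegral_const]
    simp [smul_eq_mul, Measure.real]
  have hBg : ∫ x in B, g x ∂μ = ∫ x in B, f x ∂μ := hgint B hBm hBinv
  rw [hint, hBg] at hpos
  have hμB : μ B = 0 := by
    have h2 : (0:ℝ) ≤ (μ B).toReal := ENNReal.toReal_nonneg
    have h3 : (μ B).toReal = 0 := by nlinarith
    exact ((ENNReal.toReal_eq_zero_iff _).mp h3).resolve_right (measure_ne_top μ B)
  have hae : ∀ᵐ x ∂μ, P x := by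
    rw [ae_iff]
    rw [show {x | ¬ P x} = B by rw [hB, compl_setOf]]
    exact hμB
  filter_upwards [hae] with x hx
  filter_upwards [hx ε hε, eventually_ge_atTop 1] with n hn hn1
  have hn0 : (0:ℝ) < n := by exact_mod_cast hn1
  simp only [hu, hSφ] at hn
  rw [div_le_iff₀ hn0] at hn ⊢
  nlinarith

theorem birkhoff_abstract (hT : Measurable T) (hTμ : MeasurePreserving T μ μ)
    (hfm : Measurable f) (hf : Integrable f μ) {g : α → ℝ} (hgm : Measurable g)
    (hgi : Integrable g μ) (hgT : ∀ x, g (T x) = g x)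
    (hgint : ∀ B : Set α, MeasurableSet B → T ⁻¹' B = B → ∫ x in B, g x ∂μ = ∫ x in B, f x ∂μ) :
    ∀ᵐ x ∂μ, Tendsto (fun n => birkhoffSum T f n x / n) atTop (𝓝 (g x)) := by
  have hSneg : ∀ (n : ℕ) (x : α), birkhoffSum T (fun y => -f y) n x = -birkhoffSum T f n x := by
    intro n x
    simp [birkhoffSum, Finset.sum_neg_distrib]
  have hup : ∀ k : ℕ, ∀ᵐ x ∂μ, ∀ᶠ n in atTop,
      birkhoffSum T f n x / n ≤ g x + 2 * (1 / (k + 1)) :=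
    fun k => birkhoff_onesided hT hTμ hfm hf hgm hgi hgT hgint
      (by positivity : (0:ℝ) < 1 / (k + 1))
  have hlo : ∀ k : ℕ, ∀ᵐ x ∂μ, ∀ᶠ n in atTop,
      g x - 2 * (1 / (k + 1)) ≤ birkhoffSum T f n x / n := by
    intro k
    have hgint' : ∀ B : Set α, MeasurableSet B → T ⁻¹' B = B →
        ∫ x in B, -g x ∂μ = ∫ x in B, -f x ∂μ := by
      intro B hBm hBi
      rw [integral_neg, integral_neg, hgint B hBm hBi]
    have h := birkhoff_onesided hT hTμ hfm.neg hf.neg hgm.neg hgi.neg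
      (fun x => by simp [hgT x]) hgint' (by positivity : (0:ℝ) < 1 / (k + 1))
    filter_upwards [h] with x hx
    filter_upwards [hx] with n hn
    rw [show birkhoffSum T (-f) n x = birkhoffSum T (fun y => -f y) n x from rfl, hSneg] at hn
    have : -(birkhoffSum T f n x / n) ≤ -g x + 2 * (1 / (k + 1)) := by
      rw [neg_div] at hn
      exact hn
    linarith
  have hall : ∀ᵐ x ∂μ, ∀ k : ℕ, (∀ᶠ n in atTop, birkhoffSum T f n x / n ≤ g x + 2 * (1 / (k + 1)))
      ∧ (∀ᶠ n in atTop, g x - 2 * (1 / (k + 1)) ≤ birkhoffSum T f n x / n) :=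
    ae_all_iff.mpr fun k => (hup k).and (hlo k)
  filter_upwards [hall] with x hx
  rw [Metric.tendsto_atTop]
  intro ε hε
  obtain ⟨k, hk⟩ := exists_nat_one_div_lt (half_pos hε)
  have hk' : 2 * (1 / ((k:ℝ) + 1)) < ε := by
    have : (1:ℝ) / (k + 1) < ε / 2 := by exact_mod_cast hk
    linarith
  obtain ⟨N, hN⟩ := eventually_atTop.mp ((hx k).1.and (hx k).2)
  refine ⟨N, fun n hn => ?_⟩
  obtain ⟨h1, h2⟩ := hN n hn
  rw [Real.dist_eq, abs_lt]
  constructor <;> linarith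


end BirkhoffAux

open BirkhoffAux
/-- The shift on the path space of an `ℝ×ℝ`-valued process. -/
def shiftSeq : (ℕ → ℝ × ℝ) → (ℕ → ℝ × ℝ) := fun s i => s (i + 1)

/-- The invariant σ-algebra `ℰ` of the shift: measurable sets `A` with
`shift⁻¹ A = A`. -/
def invSigma : MeasurableSpace (ℕ → ℝ × ℝ) where
  MeasurableSet' A := MeasurableSet A ∧ shiftSeq ⁻¹' A = A
  measurableSet_empty := ⟨MeasurableSet.empty, by simp⟩
  measurableSet_compl := fun A hA => ⟨hA.1.compl, by rw [Set.preimage_compl, hA.2]⟩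
  measurableSet_iUnion := fun f hf =>
    ⟨MeasurableSet.iUnion fun i => (hf i).1, by
      rw [Set.preimage_iUnion]; exact Set.iUnion_congr fun i => (hf i).2⟩

/-- **Proposition 1 (first part).** Let `(X_1,Y_1), (X_2,Y_2), …` be a
stationary `ℝ×ℝ`-valued process (its law `μ` on path space is shift-invariant)
with `E|Y_1| < ∞`.  Then the sample path is stable with probability one: for
every `t ∈ ℝ`, the empirical quantities
`(1/n)∑_{i=1}^n 1{X_i ≤ t}`, `(1/n)∑_{i=1}^n 1{X_i = t}`,
`(1/n)∑_{i=1}^n Y_i·1{X_i ≤ t}` and `(1/n)∑_{i=1}^n Y_i·1{X_i = t}`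
converge almost surely, namely to the conditional expectations given the
invariant σ-algebra `ℰ` of the shift. -/
theorem stationary_sample_path_stable
    (μ : Measure (ℕ → ℝ × ℝ)) [IsProbabilityMeasure μ]
    (hstat : μ.map shiftSeq = μ)
    (hY : Integrable (fun s => (s 0).2) μ) :
    ∀ t : ℝ, ∀ᵐ s ∂μ,
      Tendsto
        (fun n => (∑ i ∈ Finset.range n, (Iic t).indicator (fun _ => (1 : ℝ)) ((s i).1)) / n)
        atTop
        (nhds ((μ[(fun s' => (Iic t).indicator (fun _ => (1 : ℝ)) ((s' 0).1)) | invSigma]) s)) ∧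
      Tendsto
        (fun n => (∑ i ∈ Finset.range n, ({t} : Set ℝ).indicator (fun _ => (1 : ℝ)) ((s i).1)) / n)
        atTop
        (nhds ((μ[(fun s' => ({t} : Set ℝ).indicator (fun _ => (1 : ℝ)) ((s' 0).1)) | invSigma]) s)) ∧
      Tendsto
        (fun n => (∑ i ∈ Finset.range n, (Iic t).indicator (fun _ => (s i).2) ((s i).1)) / n)
        atTop
        (nhds ((μ[(fun s' => (Iic t).indicator (fun _ => (s' 0).2) ((s' 0).1)) | invSigma]) s)) ∧
      Tendsto
        (fun n => (∑ i ∈ Finset.range n, ({t} : Set ℝ).indicator (fun _ => (s i).2) ((s i).1)) / n)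
        atTop
        (nhds ((μ[(fun s' => ({t} : Set ℝ).indicator (fun _ => (s' 0).2) ((s' 0).1)) | invSigma]) s)) := by
  intro t
  have hTm : Measurable shiftSeq := measurable_pi_lambda _ fun i => measurable_pi_apply (i + 1)
  have hTμ : MeasurePreserving shiftSeq μ μ := ⟨hTm, hstat⟩
  have hle : invSigma ≤ (inferInstance : MeasurableSpace (ℕ → ℝ × ℝ)) := fun A hA => hA.1
  haveI : SigmaFinite (μ.trim hle) := inferInstance
  have hX : Measurable fun s : ℕ → ℝ × ℝ => (s 0).1 := (measurable_pi_apply 0).fst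
  have hY2 : Measurable fun s : ℕ → ℝ × ℝ => (s 0).2 := (measurable_pi_apply 0).snd
  have hiter : ∀ (i : ℕ) (s : ℕ → ℝ × ℝ), (shiftSeq^[i] s) 0 = s i := by
    intro i
    induction i with
    | zero => intro s; rfl
    | succ i ih =>
      intro s
      rw [Function.iterate_succ_apply, ih]
      rfl
  have main : ∀ F : (ℕ → ℝ × ℝ) → ℝ, Measurable F → Integrable F μ →
      ∀ᵐ s ∂μ, Tendsto (fun n => (∑ i ∈ Finset.range n, F (shiftSeq^[i] s)) / n) atTop
        (nhds ((μ[F|invSigma]) s)) := by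
    intro F hFm hFi
    have hgsm : StronglyMeasurable[invSigma] (μ[F|invSigma]) := stronglyMeasurable_condExp
    have hgm0 : Measurable[invSigma] (μ[F|invSigma]) := hgsm.measurable
    have hgm : Measurable (μ[F|invSigma]) := hgm0.mono hle le_rfl
    have hgT : ∀ s, (μ[F|invSigma]) (shiftSeq s) = (μ[F|invSigma]) s := by
      intro s
      have hA : MeasurableSet[invSigma] ((μ[F|invSigma]) ⁻¹' {(μ[F|invSigma]) s}) :=
        hgm0 (measurableSet_singleton _)
      have hinv : shiftSeq ⁻¹' ((μ[F|invSigma]) ⁻¹' {(μ[F|invSigma]) s})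
          = (μ[F|invSigma]) ⁻¹' {(μ[F|invSigma]) s} := hA.2
      have hx : s ∈ (μ[F|invSigma]) ⁻¹' {(μ[F|invSigma]) s} := rfl
      have hx' : s ∈ shiftSeq ⁻¹' ((μ[F|invSigma]) ⁻¹' {(μ[F|invSigma]) s}) := by
        rw [hinv]; exact hx
      exact hx'
    have hgint : ∀ B : Set (ℕ → ℝ × ℝ), MeasurableSet B → shiftSeq ⁻¹' B = B →
        ∫ x in B, (μ[F|invSigma]) x ∂μ = ∫ x in B, F x ∂μ := fun B hBm hBi =>
      setIntegral_condExp hle hFi (show MeasurableSet[invSigma] B from ⟨hBm, hBi⟩)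
    have h := birkhoff_abstract hTm hTμ hFm hFi hgm integrable_condExp hgT hgint
    filter_upwards [h] with s hs
    exact hs.congr fun n => by rw [birkhoffSum]
  -- the four functions
  have hm1 : Measurable (fun s' : ℕ → ℝ × ℝ => (Iic t).indicator (fun _ => (1 : ℝ)) ((s' 0).1)) :=
    (measurable_const.indicator measurableSet_Iic).comp hX
  have hi1 : Integrable (fun s' : ℕ → ℝ × ℝ => (Iic t).indicator (fun _ => (1 : ℝ)) ((s' 0).1)) μ := by
    refine Integrable.mono' (integrable_const (1:ℝ)) hm1.aestronglyMeasurable (ae_of_all _ fun s' => ?_)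
    rw [Real.norm_eq_abs]
    by_cases h : (s' 0).1 ∈ Iic t
    · simp [Set.indicator_of_mem h]
    · simp [Set.indicator_of_notMem h]
  have hm2 : Measurable (fun s' : ℕ → ℝ × ℝ => ({t} : Set ℝ).indicator (fun _ => (1 : ℝ)) ((s' 0).1)) :=
    (measurable_const.indicator (measurableSet_singleton t)).comp hX
  have hi2 : Integrable (fun s' : ℕ → ℝ × ℝ => ({t} : Set ℝ).indicator (fun _ => (1 : ℝ)) ((s' 0).1)) μ := by
    refine Integrable.mono' (integrable_const (1:ℝ)) hm2.aestronglyMeasurable (ae_of_all _ fun s' => ?_)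
    rw [Real.norm_eq_abs]
    by_cases h : (s' 0).1 ∈ ({t} : Set ℝ)
    · simp [Set.indicator_of_mem h]
    · simp [Set.indicator_of_notMem h]
  have hs3 : MeasurableSet {s' : ℕ → ℝ × ℝ | (s' 0).1 ≤ t} := hX measurableSet_Iic
  have hf3eq : (fun s' : ℕ → ℝ × ℝ => (Iic t).indicator (fun _ => (s' 0).2) ((s' 0).1))
      = Set.indicator {s' : ℕ → ℝ × ℝ | (s' 0).1 ≤ t} (fun s' => (s' 0).2) := by
    funext s'
    simp only [Set.indicator_apply, Set.mem_Iic, Set.mem_setOf_eq]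
  have hm3 : Measurable (fun s' : ℕ → ℝ × ℝ => (Iic t).indicator (fun _ => (s' 0).2) ((s' 0).1)) := by
    rw [hf3eq]; exact hY2.indicator hs3
  have hi3 : Integrable (fun s' : ℕ → ℝ × ℝ => (Iic t).indicator (fun _ => (s' 0).2) ((s' 0).1)) μ := by
    rw [hf3eq]; exact hY.indicator hs3
  have hs4 : MeasurableSet {s' : ℕ → ℝ × ℝ | (s' 0).1 = t} := hX (measurableSet_singleton t)
  have hf4eq : (fun s' : ℕ → ℝ × ℝ => ({t} : Set ℝ).indicator (fun _ => (s' 0).2) ((s' 0).1))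
      = Set.indicator {s' : ℕ → ℝ × ℝ | (s' 0).1 = t} (fun s' => (s' 0).2) := by
    funext s'
    simp only [Set.indicator_apply, Set.mem_singleton_iff, Set.mem_setOf_eq]
  have hm4 : Measurable (fun s' : ℕ → ℝ × ℝ => ({t} : Set ℝ).indicator (fun _ => (s' 0).2) ((s' 0).1)) := by
    rw [hf4eq]; exact hY2.indicator hs4
  have hi4 : Integrable (fun s' : ℕ → ℝ × ℝ => ({t} : Set ℝ).indicator (fun _ => (s' 0).2) ((s' 0).1)) μ := by
    rw [hf4eq]; exact hY.indicator hs4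
  filter_upwards [main _ hm1 hi1, main _ hm2 hi2, main _ hm3 hi3, main _ hm4 hi4]
    with s h1 h2 h3 h4
  refine ⟨h1.congr fun n => by simp only [hiter], h2.congr fun n => by simp only [hiter],
    h3.congr fun n => by simp only [hiter], h4.congr fun n => by simp only [hiter]⟩
end
end

section
/- Let (X_1,Y_1), (X_2,Y_2), … be a stationary ergodic sequence of ℝ×ℝ-valued random variables with E|Y_1| < ∞, let μ(A) = P(X_1 ∈ A), and let m(t) = E[Y_1 | X_1 = t] (a version of the conditional expectation, so that ∫_A m dμ = E[Y_1·1{X_1 ∈ A}] for all Borel A). Then with probability one the sample path satisfies ((X_1,X_2,…),(Y_1,Y_2,…)) ∈ Ω(μ,m): for every t ∈ ℝ, (1/n)∑_{i=1}^n 1{X_i ≤ t} → μ((−∞,t]), (1/n)∑_{i=1}^n 1{X_i = t} → μ({t}), (1/n)∑_{i=1}^n Y_i·1{X_i ≤ t} → ∫_{(−∞,t]} m dμ, and (1/n)∑_{i=1}^n Y_i·1{X_i = t} → ∫_{{t}} m dμ. -/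
open MeasureTheory Filter Set

noncomputable section

namespace ErgodicAux



variable {α : Type*} [MeasurableSpace α] {μ : Measure α} {T : α → α} {g : α → ℝ}

/-- `maxSum T g N x = max_{1 ≤ n ≤ N+1} S_n g (x)`. -/
def maxSum (T : α → α) (g : α → ℝ) : ℕ → α → ℝ
  | 0, x => g x
  | (N + 1), x => max (birkhoffSum T g (N + 2) x) (maxSum T g N x)

omit [MeasurableSpace α] in
lemma le_maxSum (T : α → α) (g : α → ℝ) {N n : ℕ} (hn : n ≤ N) (x : α) :
    birkhoffSum T g (n + 1) x ≤ maxSum T g N x := by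
  induction N with
  | zero =>
    rw [Nat.le_zero.mp hn]
    simp [maxSum, birkhoffSum_one]
  | succ N ih =>
    rcases Nat.lt_or_ge n (N + 1) with h' | h'
    · exact (ih (Nat.lt_succ_iff.mp h')).trans (le_max_right _ _)
    · have : n = N + 1 := le_antisymm hn h'
      subst this
      exact le_max_left _ _

lemma measurable_birkhoffSum (hT : Measurable T) (hg : Measurable g) (n : ℕ) :
    Measurable (fun x => birkhoffSum T g n x) := by
  unfold birkhoffSum
  exact Finset.measurable_sum _ (fun i _ => hg.comp (hT.iterate i))

lemma measurable_maxSum (hT : Measurable T) (hg : Measurable g) (N : ℕ) :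
    Measurable (maxSum T g N) := by
  induction N with
  | zero => exact hg
  | succ N ih => exact (measurable_birkhoffSum hT hg _).max ih

lemma integrable_birkhoffSum (hT : MeasurePreserving T μ μ) (hg : Integrable g μ) (n : ℕ) :
    Integrable (fun x => birkhoffSum T g n x) μ := by
  unfold birkhoffSum
  exact integrable_finset_sum _ (fun i _ =>
    ((hT.iterate i).integrable_comp hg.aestronglyMeasurable).mpr hg)

lemma integrable_maxSum (hT : MeasurePreserving T μ μ) (hg : Integrable g μ) (N : ℕ) :
    Integrable (maxSum T g N) μ := by
  induction N with
  | zero => exact hg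
  | succ N ih =>
    have h := (integrable_birkhoffSum hT hg (N + 2)).sup ih
    rw [show maxSum T g (N + 1) = (fun x => birkhoffSum T g (N + 2) x) ⊔ maxSum T g N from by
      funext x; simp [maxSum]]
    exact h

omit [MeasurableSpace α] in
lemma maxSum_le_of {T : α → α} {g : α → ℝ} {N : ℕ} {x : α} {c : ℝ}
    (h : ∀ n ≤ N, birkhoffSum T g (n + 1) x ≤ c) : maxSum T g N x ≤ c := by
  induction N with
  | zero => simpa [maxSum, birkhoffSum_one] using h 0 le_rfl
  | succ N ih => exact max_le (h (N + 1) le_rfl) (ih fun n hn => h n (by omega))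

omit [MeasurableSpace α] in
/-- Key pointwise inequality for the maximal ergodic theorem. -/
lemma maxSum_le (T : α → α) (g : α → ℝ) (N : ℕ) (x : α) :
    maxSum T g N x ≤ g x + max (maxSum T g N (T x)) 0 := by
  refine maxSum_le_of (fun n hn => ?_)
  rw [birkhoffSum_succ' T g n x]
  rcases n with _ | m
  · simpa using le_max_right (maxSum T g N (T x)) 0
  · refine add_le_add (le_refl (g x)) ?_
    exact le_trans (le_maxSum T g (by omega : m ≤ N) (T x)) (le_max_left _ _)

/-- Maximal ergodic lemma (Garsia). -/
lemma maximal_ergodic (hT : MeasurePreserving T μ μ) (hTm : Measurable T)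
    (hgm : Measurable g) (hg : Integrable g μ) (N : ℕ) :
    0 ≤ ∫ x in {x | 0 < maxSum T g N x}, g x ∂μ := by
  set M := maxSum T g N with hM
  set E := {x | 0 < M x} with hE
  have hMm : Measurable M := measurable_maxSum hTm hgm N
  have hEm : MeasurableSet E := measurableSet_lt measurable_const hMm
  have hMi : Integrable M μ := integrable_maxSum hT hg N
  have hMTi : Integrable (fun x => M (T x)) μ :=
    (hT.integrable_comp hMi.aestronglyMeasurable).mpr hMi
  have hMTpi : Integrable (fun x => max (M (T x)) 0) μ := hMTi.pos_part
  have hMpi : Integrable (fun x => max (M x) 0) μ := hMi.pos_part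
  have hind : E.indicator M = fun x => max (M x) 0 := by
    funext x
    by_cases hx : x ∈ E
    · rw [Set.indicator_of_mem hx, max_eq_left (le_of_lt hx)]
    · rw [Set.indicator_of_notMem hx, max_eq_right (le_of_not_gt hx)]
  have h1 : ∫ x in E, M x ∂μ = ∫ x, max (M x) 0 ∂μ := by
    rw [← integral_indicator hEm, hind]
  have h2 : ∫ x in E, max (M (T x)) 0 ∂μ ≤ ∫ x, max (M (T x)) 0 ∂μ :=
    setIntegral_le_integral hMTpi (Filter.Eventually.of_forall fun x => le_max_right _ _)
  have hasm : AEStronglyMeasurable (fun y => max (M y) 0) (μ.map T) := by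
    rw [hT.map_eq]
    exact (hMm.max measurable_const).aestronglyMeasurable
  have h3 : ∫ x, max (M (T x)) 0 ∂μ = ∫ x, max (M x) 0 ∂μ := by
    calc ∫ x, max (M (T x)) 0 ∂μ = ∫ y, max (M y) 0 ∂(μ.map T) :=
          (integral_map hTm.aemeasurable hasm).symm
      _ = ∫ x, max (M x) 0 ∂μ := by rw [hT.map_eq]
  have h4 : ∫ x in E, (M x - max (M (T x)) 0) ∂μ ≤ ∫ x in E, g x ∂μ := by
    refine setIntegral_mono_on (hMi.integrableOn.sub hMTpi.integrableOn)
      hg.integrableOn hEm (fun x _ => ?_)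
    have h6 := maxSum_le T g N x
    rw [← hM] at h6
    linarith
  have h5 : ∫ x in E, (M x - max (M (T x)) 0) ∂μ
      = ∫ x in E, M x ∂μ - ∫ x in E, max (M (T x)) 0 ∂μ :=
    integral_sub hMi.integrableOn hMTpi.integrableOn
  linarith

omit [MeasurableSpace α] in
lemma avg_lt_iff {T : α → α} {g : α → ℝ} {x : α} {c : ℝ} {n : ℕ} (hn : 1 ≤ n) :
    c < birkhoffAverage ℝ T g n x ↔ (n : ℝ) * c < birkhoffSum T g n x := by
  have hn' : (0 : ℝ) < n := by exact_mod_cast hn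
  rw [birkhoffAverage, smul_eq_mul, lt_inv_mul_iff₀ hn']

omit [MeasurableSpace α] in
lemma pos_limsup_iff {u : ℕ → ℝ} :
    0 < limsup (fun n => ((u n : ℝ) : EReal)) atTop ↔
      ∃ c : ℝ, 0 < c ∧ ∃ᶠ n in atTop, c < u n := by
  constructor
  · intro h
    obtain ⟨c, hc0, hcl⟩ := EReal.lt_iff_exists_real_btwn.mp h
    refine ⟨c, by exact_mod_cast hc0, ?_⟩
    have hf := frequently_lt_of_lt_limsup (u := fun n => ((u n : ℝ) : EReal)) (by isBoundedDefault) hcl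
    exact hf.mono (fun n hn => by exact_mod_cast (show ((c:ℝ):EReal) < ((u n : ℝ):EReal) from hn))
  · rintro ⟨c, hc, hf⟩
    have h1 : ((c : ℝ) : EReal) ≤ limsup (fun n => ((u n : ℝ) : EReal)) atTop :=
      le_limsup_of_frequently_le (hf.mono fun n h => by exact_mod_cast le_of_lt h)
        (by isBoundedDefault)
    exact lt_of_lt_of_le (by exact_mod_cast hc) h1

omit [MeasurableSpace α] in
/-- The set `{limsup A_n g > 0}` is invariant under `T`. -/
lemma limsup_pos_shift (T : α → α) (g : α → ℝ) (x : α) :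
    (0 < limsup (fun n => ((birkhoffAverage ℝ T g n (T x) : ℝ) : EReal)) atTop) ↔
      (0 < limsup (fun n => ((birkhoffAverage ℝ T g n x : ℝ) : EReal)) atTop) := by
  rw [pos_limsup_iff, pos_limsup_iff]
  constructor
  · -- from `T x` to `x`
    rintro ⟨c, hc, hf⟩
    refine ⟨c / 2, by linarith, ?_⟩
    rw [Filter.frequently_atTop] at hf ⊢
    intro N
    obtain ⟨m2, hm2⟩ := exists_nat_ge ((c / 2 - g x) / (c / 2))
    obtain ⟨m, hm, hcm⟩ := hf (max N (max m2 1))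
    have hmN : N ≤ m := le_trans (le_max_left _ _) hm
    have hm1 : 1 ≤ m := le_trans (le_trans (le_max_right _ _) (le_max_right _ _)) hm
    have hmm2 : (m2 : ℝ) ≤ m := by
      exact_mod_cast le_trans (le_trans (le_max_left _ _) (le_max_right _ _)) hm
    refine ⟨m + 1, by omega, ?_⟩
    rw [avg_lt_iff hm1] at hcm
    rw [avg_lt_iff (by omega : 1 ≤ m + 1), birkhoffSum_succ' T g m x]
    have key : c / 2 - g x ≤ (m : ℝ) * (c / 2) :=
      (div_le_iff₀ (by linarith : (0:ℝ) < c / 2)).mp (le_trans hm2 hmm2)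
    push_cast
    linarith
  · -- from `x` to `T x`
    rintro ⟨c, hc, hf⟩
    refine ⟨c / 2, by linarith, ?_⟩
    rw [Filter.frequently_atTop] at hf ⊢
    intro N
    obtain ⟨m1, hm1⟩ := exists_nat_ge ((g x - c) / (c / 2))
    obtain ⟨n, hn, hcn⟩ := hf (max (N + 1) (max (m1 + 1) 2))
    have hn2 : 2 ≤ n := le_trans (le_trans (le_max_right _ _) (le_max_right _ _)) hn
    obtain ⟨m, rfl⟩ : ∃ m, n = m + 1 := ⟨n - 1, by omega⟩
    have hmN : N ≤ m := by
      have := le_trans (le_max_left _ _) hn; omega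
    have hm1' : 1 ≤ m := by omega
    have hmm1 : (m1 : ℝ) ≤ m := by
      have : m1 + 1 ≤ m + 1 := le_trans (le_trans (le_max_left _ _) (le_max_right _ _)) hn
      exact_mod_cast by omega
    refine ⟨m, hmN, ?_⟩
    rw [avg_lt_iff (by omega : 1 ≤ m + 1), birkhoffSum_succ' T g m x] at hcn
    rw [avg_lt_iff hm1']
    have key : g x - c ≤ (m : ℝ) * (c / 2) :=
      (div_le_iff₀ (by linarith : (0:ℝ) < c / 2)).mp (le_trans hm1 hmm1)
    push_cast at hcn ⊢
    linarith

lemma measurable_avg_ereal (hTm : Measurable T) (hgm : Measurable g) (n : ℕ) :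
    Measurable (fun x => ((birkhoffAverage ℝ T g n x : ℝ) : EReal)) := by
  refine Measurable.coe_real_ereal ?_
  unfold birkhoffAverage
  exact Measurable.const_smul (measurable_birkhoffSum hTm hgm n) ((n : ℝ)⁻¹)

/-- Ergodic half of Birkhoff: if `∫ g < 0` then a.e. `limsup Aₙg ≤ 0`. -/
lemma ergodic_limsup_nonpos [IsProbabilityMeasure μ] (hT : Ergodic T μ)
    (hgm : Measurable g) (hg : Integrable g μ) (hneg : ∫ x, g x ∂μ < 0) :
    ∀ᵐ x ∂μ, limsup (fun n => ((birkhoffAverage ℝ T g n x : ℝ) : EReal)) atTop ≤ 0 := by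
  have hTm : Measurable T := hT.toMeasurePreserving.measurable
  set D := {x | 0 < limsup (fun n => ((birkhoffAverage ℝ T g n x : ℝ) : EReal)) atTop} with hD
  have hDm : MeasurableSet D :=
    measurableSet_lt measurable_const (Measurable.limsup (measurable_avg_ereal hTm hgm))
  have hinv : T ⁻¹' D = D := Set.ext fun x => limsup_pos_shift T g x
  rcases hT.ae_empty_or_univ hDm hinv with h | h
  · have h0 : μ D = 0 := by rwa [ae_eq_empty] at h
    have : ∀ᵐ x ∂μ, x ∉ D := (compl_mem_ae_iff (μ := μ)).mpr h0
    filter_upwards [this] with x hx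
    exact le_of_not_gt hx
  · exfalso
    set E : ℕ → Set α := fun N => {x | 0 < maxSum T g N x} with hEdef
    have hEm : ∀ N, MeasurableSet (E N) := fun N =>
      measurableSet_lt measurable_const (measurable_maxSum hTm hgm N)
    have hEmono : Monotone E := by
      intro N M hNM x hx
      have : maxSum T g N x ≤ maxSum T g M x := by
        clear hx
        induction M with
        | zero => rw [Nat.le_zero.mp hNM]
        | succ M ih =>
          rcases Nat.lt_or_ge N (M + 1) with h' | h'
          · exact le_trans (ih (by omega)) (le_max_right _ _)
          · rw [le_antisymm hNM h']
      exact lt_of_lt_of_le hx this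
    have hDE : D ⊆ ⋃ N, E N := by
      intro x hx
      obtain ⟨c, hc, hf⟩ := pos_limsup_iff.mp hx
      obtain ⟨n, hn1, hcn⟩ := Filter.frequently_atTop.mp hf 1
      obtain ⟨m, rfl⟩ : ∃ m, n = m + 1 := ⟨n - 1, by omega⟩
      refine Set.mem_iUnion.mpr ⟨m, ?_⟩
      have hS : (0 : ℝ) < birkhoffSum T g (m + 1) x := by
        rw [avg_lt_iff (by omega)] at hcn
        calc (0:ℝ) ≤ ((m+1 : ℕ) : ℝ) * c := by positivity
          _ < _ := hcn
      exact lt_of_lt_of_le hS (le_maxSum T g le_rfl x)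
    have hEone : μ (⋃ N, E N) = 1 := by
      have hD1 : μ D = 1 := by
        rw [measure_congr h, measure_univ]
      refine le_antisymm (le_of_le_of_eq (measure_mono (Set.subset_univ _)) measure_univ) ?_
      rw [← hD1]
      exact measure_mono hDE
    have htend := tendsto_setIntegral_of_monotone hEm hEmono hg.integrableOn
    have hnonneg : 0 ≤ ∫ x in ⋃ N, E N, g x ∂μ :=
      ge_of_tendsto' htend (fun N => maximal_ergodic hT.toMeasurePreserving hTm hgm hg N)
    have hcompl : μ (⋃ N, E N)ᶜ = 0 :=
      (prob_compl_eq_zero_iff (MeasurableSet.iUnion hEm)).mpr hEone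
    have hfull : ∫ x, g x ∂μ = ∫ x in ⋃ N, E N, g x ∂μ := by
      rw [← integral_add_compl (MeasurableSet.iUnion hEm) hg,
        Measure.restrict_eq_zero.mpr hcompl, integral_zero_measure, add_zero]
    rw [hfull] at hneg
    linarith

omit [MeasurableSpace α] in
lemma avg_sub_const (T : α → α) (g : α → ℝ) (c : ℝ) {n : ℕ} (hn : 1 ≤ n) (x : α) :
    birkhoffAverage ℝ T (fun y => g y - c) n x = birkhoffAverage ℝ T g n x - c := by
  have hn' : ((n : ℕ) : ℝ) ≠ 0 := Nat.cast_ne_zero.mpr (by omega)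
  unfold birkhoffAverage birkhoffSum
  rw [Finset.sum_sub_distrib, Finset.sum_const, Finset.card_range, nsmul_eq_mul,
    smul_eq_mul, smul_eq_mul, mul_sub]
  congr 1
  rw [← mul_assoc, inv_mul_cancel₀ hn', one_mul]

omit [MeasurableSpace α] in
lemma avg_neg (T : α → α) (g : α → ℝ) (n : ℕ) (x : α) :
    birkhoffAverage ℝ T (fun y => -(g y)) n x = -birkhoffAverage ℝ T g n x := by
  unfold birkhoffAverage birkhoffSum
  rw [Finset.sum_neg_distrib, smul_neg]

/-- **Birkhoff's pointwise ergodic theorem** (ergodic case). -/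
theorem birkhoff_ergodic [IsProbabilityMeasure μ] (hT : Ergodic T μ)
    (hgm : Measurable g) (hg : Integrable g μ) :
    ∀ᵐ x ∂μ, Tendsto (fun n => birkhoffAverage ℝ T g n x) atTop (nhds (∫ x, g x ∂μ)) := by
  have key : ∀ (h : α → ℝ), Measurable h → Integrable h μ → ∀ (ε : ℝ), 0 < ε →
      ∀ᵐ x ∂μ, ∀ᶠ n in atTop, birkhoffAverage ℝ T h n x < (∫ x, h x ∂μ) + 2 * ε := by
    intro h hm hi ε hε
    set c : ℝ := (∫ x, h x ∂μ) + ε with hc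
    have hneg : ∫ x, (h x - c) ∂μ < 0 := by
      rw [integral_sub hi (integrable_const c), integral_const]
      simp only [probReal_univ, one_smul, hc]
      linarith
    have hae := ergodic_limsup_nonpos hT (hm.sub measurable_const)
      (hi.sub (integrable_const c)) hneg
    filter_upwards [hae] with x hx
    have hlt : limsup (fun n => ((birkhoffAverage ℝ T (fun y => h y - c) n x : ℝ) : EReal)) atTop
        < ((ε : ℝ) : EReal) := lt_of_le_of_lt hx (by exact_mod_cast hε)
    have hev := eventually_lt_of_limsup_lt hlt
    filter_upwards [hev, eventually_ge_atTop 1] with n hn hn1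
    have h2 : birkhoffAverage ℝ T (fun y => h y - c) n x < ε := by
      exact_mod_cast (show ((birkhoffAverage ℝ T (fun y => h y - c) n x : ℝ) : EReal)
        < ((ε : ℝ) : EReal) from hn)
    rw [avg_sub_const T h c hn1] at h2
    rw [hc] at h2
    linarith
  have keyU : ∀ᵐ x ∂μ, ∀ k : ℕ,
      ∀ᶠ n in atTop, birkhoffAverage ℝ T g n x < (∫ x, g x ∂μ) + 2 * (1 / (k + 1)) :=
    ae_all_iff.mpr fun k => key g hgm hg (1 / (k + 1)) (by positivity)
  have keyL : ∀ᵐ x ∂μ, ∀ k : ℕ,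
      ∀ᶠ n in atTop, birkhoffAverage ℝ T (fun y => -(g y)) n x
        < (∫ x, -(g x) ∂μ) + 2 * (1 / (k + 1)) :=
    ae_all_iff.mpr fun k => key (fun y => -(g y)) hgm.neg hg.neg (1 / (k + 1)) (by positivity)
  filter_upwards [keyU, keyL] with x hU hL
  refine tendsto_order.mpr ⟨fun b hb => ?_, fun b hb => ?_⟩
  · obtain ⟨k, hk⟩ := exists_nat_one_div_lt (show (0:ℝ) < ((∫ x, g x ∂μ) - b) / 2 by linarith)
    filter_upwards [hL k] with n hn
    rw [avg_neg, integral_neg] at hn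
    have : (1 : ℝ) / (k + 1) < ((∫ x, g x ∂μ) - b) / 2 := hk
    linarith
  · obtain ⟨k, hk⟩ := exists_nat_one_div_lt (show (0:ℝ) < (b - (∫ x, g x ∂μ)) / 2 by linarith)
    filter_upwards [hU k] with n hn
    have : (1 : ℝ) / (k + 1) < (b - (∫ x, g x ∂μ)) / 2 := hk
    linarith



lemma measure_Iic_eq_Iio {ρ : Measure ℝ} {t : ℝ} (h : ρ {t} = 0) : ρ (Iic t) = ρ (Iio t) := by
  rw [← Iio_union_right, measure_union (by simp) (measurableSet_singleton t), h, add_zero]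

/-- Approximation from the left by rationals. -/
lemma exists_rat_lt_measure_Iic (ρ : Measure ℝ) [IsFiniteMeasure ρ] {t a : ℝ}
    (hatom : ρ {t} = 0) (ha : a < (ρ (Iic t)).toReal) :
    ∃ q : ℚ, (q : ℝ) < t ∧ a < (ρ (Iic (q : ℝ))).toReal := by
  have hU : (⋃ k : ℕ, Iic (t - 1 / (k + 1))) = Iio t := by
    ext x
    simp only [mem_iUnion, mem_Iic, mem_Iio]
    constructor
    · rintro ⟨k, hk⟩
      have : (0:ℝ) < 1 / ((k:ℝ) + 1) := by positivity
      linarith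
    · intro hx
      obtain ⟨k, hk⟩ := exists_nat_one_div_lt (show (0:ℝ) < t - x by linarith)
      exact ⟨k, by linarith⟩
  have hmono : Monotone (fun k : ℕ => Iic (t - 1 / ((k:ℝ) + 1))) := by
    intro i j hij
    refine Iic_subset_Iic.mpr ?_
    have h1 : ((i:ℝ) + 1) ≤ ((j:ℝ) + 1) := by exact_mod_cast by omega
    have h2 : (0:ℝ) < (i:ℝ) + 1 := by positivity
    have := one_div_le_one_div_of_le h2 h1
    linarith
  have htt := tendsto_measure_iUnion_atTop (μ := ρ) hmono
  rw [hU] at htt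
  have htt' : Tendsto (fun k : ℕ => (ρ (Iic (t - 1 / ((k:ℝ) + 1)))).toReal) atTop
      (nhds (ρ (Iio t)).toReal) :=
    (ENNReal.tendsto_toReal (measure_ne_top ρ _)).comp htt
  rw [← measure_Iic_eq_Iio hatom] at htt'
  obtain ⟨k, hk⟩ := (htt'.eventually (eventually_gt_nhds ha)).exists
  obtain ⟨q, hq1, hq2⟩ := exists_rat_btwn (show t - 1 / ((k:ℝ) + 1) < t by
    have : (0:ℝ) < 1 / ((k:ℝ) + 1) := by positivity
    linarith)
  refine ⟨q, hq2, lt_of_lt_of_le hk ?_⟩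
  exact ENNReal.toReal_le_toReal (measure_ne_top ρ _) (measure_ne_top ρ _) |>.mpr
    (measure_mono (Iic_subset_Iic.mpr hq1.le))

/-- Approximation from the right by rationals. -/
lemma exists_rat_gt_measure_Iio (ρ : Measure ℝ) [IsFiniteMeasure ρ] {t a : ℝ}
    (ha : (ρ (Iic t)).toReal < a) :
    ∃ q : ℚ, t < (q : ℝ) ∧ (ρ (Iio (q : ℝ))).toReal < a := by
  have hI : (⋂ k : ℕ, Iio (t + 1 / ((k:ℝ) + 1))) = Iic t := by
    ext x
    simp only [mem_iInter, mem_Iio, mem_Iic]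
    constructor
    · intro hx
      by_contra h
      obtain ⟨k, hk⟩ := exists_nat_one_div_lt (show (0:ℝ) < x - t by linarith [lt_of_not_ge h])
      exact absurd (hx k) (by push_neg; linarith)
    · intro hx k
      have : (0:ℝ) < 1 / ((k:ℝ) + 1) := by positivity
      linarith
  have hanti : Antitone (fun k : ℕ => Iio (t + 1 / ((k:ℝ) + 1))) := by
    intro i j hij
    refine Iio_subset_Iio ?_
    have h1 : ((i:ℝ) + 1) ≤ ((j:ℝ) + 1) := by exact_mod_cast by omega
    have h2 : (0:ℝ) < (i:ℝ) + 1 := by positivity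
    have := one_div_le_one_div_of_le h2 h1
    linarith
  have htt := tendsto_measure_iInter_atTop (μ := ρ)
    (fun k => measurableSet_Iio.nullMeasurableSet) hanti ⟨0, measure_ne_top ρ _⟩
  rw [hI] at htt
  have htt' : Tendsto (fun k : ℕ => (ρ (Iio (t + 1 / ((k:ℝ) + 1)))).toReal) atTop
      (nhds (ρ (Iic t)).toReal) :=
    (ENNReal.tendsto_toReal (measure_ne_top ρ _)).comp htt
  obtain ⟨k, hk⟩ := (htt'.eventually (eventually_lt_nhds ha)).exists
  obtain ⟨q, hq1, hq2⟩ := exists_rat_btwn (show t < t + 1 / ((k:ℝ) + 1) by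
    have : (0:ℝ) < 1 / ((k:ℝ) + 1) := by positivity
    linarith)
  refine ⟨q, hq1, lt_of_le_of_lt ?_ hk⟩
  exact ENNReal.toReal_le_toReal (measure_ne_top ρ _) (measure_ne_top ρ _) |>.mpr
    (measure_mono (Iio_subset_Iio hq2.le))

/-- Extension of convergence from a countable dense set of thresholds to all of `ℝ`. -/
lemma extend_tendsto (ρ : Measure ℝ) [IsFiniteMeasure ρ] {V : ℕ → Set ℝ → ℝ}
    (hVmono : ∀ n (A B : Set ℝ), A ⊆ B → V n A ≤ V n B)
    {D : Set ℝ} (hDQ : ∀ q : ℚ, (q : ℝ) ∈ D) (hDatom : ∀ t : ℝ, ρ {t} ≠ 0 → t ∈ D)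
    (hconv : ∀ d ∈ D, Tendsto (fun n => V n (Iic d)) atTop (nhds (ρ (Iic d)).toReal) ∧
      Tendsto (fun n => V n (Iio d)) atTop (nhds (ρ (Iio d)).toReal)) (t : ℝ) :
    Tendsto (fun n => V n (Iic t)) atTop (nhds (ρ (Iic t)).toReal) ∧
      Tendsto (fun n => V n (Iio t)) atTop (nhds (ρ (Iio t)).toReal) := by
  by_cases ht : t ∈ D
  · exact hconv t ht
  have hatom : ρ {t} = 0 := by
    by_contra h; exact ht (hDatom t h)
  have hIioIic : ρ (Iio t) = ρ (Iic t) := (measure_Iic_eq_Iio hatom).symm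
  have lower : ∀ b < (ρ (Iic t)).toReal,
      (∀ᶠ n in atTop, b < V n (Iic t)) ∧ (∀ᶠ n in atTop, b < V n (Iio t)) := by
    intro b hb
    obtain ⟨q, hq1, hq2⟩ := exists_rat_lt_measure_Iic ρ hatom hb
    have hev := ((hconv (q : ℝ) (hDQ q)).1.eventually (eventually_gt_nhds hq2))
    constructor
    · filter_upwards [hev] with n hn
      exact lt_of_lt_of_le hn (hVmono n _ _ (Iic_subset_Iic.mpr hq1.le))
    · filter_upwards [hev] with n hn
      exact lt_of_lt_of_le hn (hVmono n _ _ (Iic_subset_Iio.mpr hq1))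
  have upper : ∀ b, (ρ (Iic t)).toReal < b →
      (∀ᶠ n in atTop, V n (Iic t) < b) ∧ (∀ᶠ n in atTop, V n (Iio t) < b) := by
    intro b hb
    obtain ⟨q, hq1, hq2⟩ := exists_rat_gt_measure_Iio ρ hb
    have hev := ((hconv (q : ℝ) (hDQ q)).2.eventually (eventually_lt_nhds hq2))
    constructor
    · filter_upwards [hev] with n hn
      exact lt_of_le_of_lt (hVmono n _ _ (Iic_subset_Iio.mpr hq1)) hn
    · filter_upwards [hev] with n hn
      exact lt_of_le_of_lt (hVmono n _ _ ((Iio_subset_Iic_self).trans (Iic_subset_Iio.mpr hq1))) hn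
  constructor
  · exact tendsto_order.mpr ⟨fun b hb => (lower b hb).1, fun b hb => (upper b hb).1⟩
  · rw [hIioIic]
    exact tendsto_order.mpr ⟨fun b hb => (lower b hb).2, fun b hb => (upper b hb).2⟩


end ErgodicAux

/-- Empirical distribution of the first `n` terms of `x`. -/
def muHat (x : ℕ → ℝ) (n : ℕ) (A : Set ℝ) : ℝ :=
  (∑ i ∈ Finset.range n, A.indicator (fun _ => (1 : ℝ)) (x i)) / n

/-- Joint sample average `ν̂_n(A) = (1/n) ∑_{i=1}^n y_i · 1{x_i ∈ A}`. -/
def nuHat (x y : ℕ → ℝ) (n : ℕ) (A : Set ℝ) : ℝ :=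
  (∑ i ∈ Finset.range n, A.indicator (fun _ => y i) (x i)) / n

/-- The signed measure `ν(A) = ∫_A m dμ`. -/
def nuM (μ : Measure ℝ) (m : ℝ → ℝ) (A : Set ℝ) : ℝ := ∫ t in A, m t ∂μ

/-- `(x,y) ∈ Ω(μ,m)`: `x` has limiting distribution `μ` and `(x,y)` has
limiting regression `m`. -/
def memOmega (μ : Measure ℝ) (m : ℝ → ℝ) (x y : ℕ → ℝ) : Prop :=
  (∀ t : ℝ, Tendsto (fun n => muHat x n (Iic t)) atTop (nhds (μ (Iic t)).toReal)) ∧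
  (∀ t : ℝ, Tendsto (fun n => muHat x n {t}) atTop (nhds (μ {t}).toReal)) ∧
  (∀ t : ℝ, Tendsto (fun n => nuHat x y n (Iic t)) atTop (nhds (nuM μ m (Iic t)))) ∧
  (∀ t : ℝ, Tendsto (fun n => nuHat x y n {t}) atTop (nhds (nuM μ m {t})))

namespace ErgodicAux

lemma shiftSeq_iter (i : ℕ) (s : ℕ → ℝ × ℝ) (j : ℕ) : (shiftSeq^[i] s) j = s (j + i) := by
  induction i generalizing s with
  | zero => rfl
  | succ i ih =>
    rw [Function.iterate_succ_apply, ih (shiftSeq s)]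
    show s (j + i + 1) = s (j + (i + 1))
    exact congrArg s (by omega)

lemma measurable_shiftSeq : Measurable shiftSeq :=
  measurable_pi_lambda _ fun i => measurable_pi_apply (i + 1)

lemma sum_indicator_singleton_eq (x : ℕ → ℝ) (c : ℕ → ℝ) (t : ℝ) (n : ℕ) :
    (∑ i ∈ Finset.range n, ({t} : Set ℝ).indicator (fun _ => c i) (x i)) / n
      = (∑ i ∈ Finset.range n, (Iic t).indicator (fun _ => c i) (x i)) / n
        - (∑ i ∈ Finset.range n, (Iio t).indicator (fun _ => c i) (x i)) / n := by
  rw [← sub_div, ← Finset.sum_sub_distrib]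
  congr 1
  refine Finset.sum_congr rfl fun i _ => ?_
  rcases lt_trichotomy (x i) t with h | h | h
  · simp [Set.indicator, Set.mem_Iic, Set.mem_Iio, h, le_of_lt h, ne_of_lt h]
  · simp [Set.indicator, Set.mem_Iic, Set.mem_Iio, h]
  · simp [Set.indicator, Set.mem_Iic, Set.mem_Iio, not_le.mpr h, not_lt.mpr (le_of_lt h),
      lt_irrefl, (ne_of_gt h)]

lemma sum_indicator_split (x y : ℕ → ℝ) (A : Set ℝ) (n : ℕ) :
    (∑ i ∈ Finset.range n, A.indicator (fun _ => y i) (x i)) / n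
      = (∑ i ∈ Finset.range n, A.indicator (fun _ => max (y i) 0) (x i)) / n
        - (∑ i ∈ Finset.range n, A.indicator (fun _ => max (-(y i)) 0) (x i)) / n := by
  rw [← sub_div, ← Finset.sum_sub_distrib]
  congr 1
  refine Finset.sum_congr rfl fun i _ => ?_
  by_cases h : x i ∈ A
  · simp [Set.indicator, h, max_zero_sub_max_neg_zero_eq_self]
  · simp [Set.indicator, h]

lemma toReal_singleton (ρ : Measure ℝ) [IsFiniteMeasure ρ] (t : ℝ) :
    (ρ {t}).toReal = (ρ (Iic t)).toReal - (ρ (Iio t)).toReal := by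
  have hd : Disjoint (Iio t) ({t} : Set ℝ) := by
    simp [Set.disjoint_singleton_right]
  have h : ρ (Iic t) = ρ (Iio t) + ρ {t} := by
    rw [← Iio_union_right, measure_union hd (measurableSet_singleton t)]
  rw [h, ENNReal.toReal_add (measure_ne_top _ _) (measure_ne_top _ _)]
  ring

lemma sum_div_indicator_mono (x : ℕ → ℝ) (c : ℕ → ℝ) (hc : ∀ i, 0 ≤ c i) (n : ℕ)
    (A B : Set ℝ) (hAB : A ⊆ B) :
    (∑ i ∈ Finset.range n, A.indicator (fun _ => c i) (x i)) / n
      ≤ (∑ i ∈ Finset.range n, B.indicator (fun _ => c i) (x i)) / n := by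
  rcases Nat.eq_zero_or_pos n with rfl | hn
  · simp
  have hn' : (0:ℝ) < n := by exact_mod_cast hn
  rw [div_le_div_iff_of_pos_right hn']
  exact Finset.sum_le_sum fun i _ =>
    Set.indicator_le_indicator_of_subset hAB (fun _ => hc i) (x i)

lemma countable_atoms (ρ : Measure ℝ) [IsFiniteMeasure ρ] :
    {t : ℝ | ρ {t} ≠ 0}.Countable := by
  have h := MeasureTheory.Measure.countable_meas_pos_of_disjoint_of_meas_iUnion_ne_top ρ
    (As := fun t : ℝ => {t}) (fun t => measurableSet_singleton t)
    (fun a b hab => by simp [Function.onFun, Set.disjoint_singleton, hab])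
    (measure_ne_top ρ _)
  refine h.mono (fun t ht => ?_)
  exact pos_iff_ne_zero.mpr ht

end ErgodicAux

set_option maxHeartbeats 2000000 in
/-- **Proposition 1 (second part).** Let `(X_1,Y_1), (X_2,Y_2), …` be a
stationary ergodic `ℝ×ℝ`-valued process (its law `μ` on path space makes the
shift ergodic) with `E|Y_1| < ∞`.  Let `μX` be the distribution of `X_1` and
let `m` be a version of the conditional expectation `E[Y_1 | X_1 = ·]`, i.e.
`∫_A m dμX = E[Y_1·1{X_1 ∈ A}]` for all Borel `A`.  Then with probability one
the sample path satisfies `((X_i)_i, (Y_i)_i) ∈ Ω(μX, m)`. -/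
theorem ergodic_sample_path_in_Omega
    (μ : Measure (ℕ → ℝ × ℝ)) [IsProbabilityMeasure μ]
    (herg : Ergodic shiftSeq μ)
    (hY : Integrable (fun s => (s 0).2) μ)
    (m : ℝ → ℝ) (hmMeas : Measurable m)
    (hmVersion : ∀ A : Set ℝ, MeasurableSet A →
      ∫ t in A, m t ∂(μ.map (fun s => (s 0).1)) =
        ∫ s, A.indicator (fun _ => (s 0).2) ((s 0).1) ∂μ) :
    ∀ᵐ s ∂μ,
      memOmega (μ.map (fun s' => (s' 0).1)) m (fun i => (s i).1) (fun i => (s i).2) := by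
  classical
  have hX0m : Measurable (fun s' : ℕ → ℝ × ℝ => (s' 0).1) := (measurable_pi_apply 0).fst
  have hY0m : Measurable (fun s : ℕ → ℝ × ℝ => (s 0).2) := (measurable_pi_apply 0).snd
  set ρ0 : Measure ℝ := μ.map (fun s' => (s' 0).1) with hρ0
  haveI : IsProbabilityMeasure ρ0 := Measure.isProbabilityMeasure_map hX0m.aemeasurable
  -- the positive / negative part weights, as functions of one coordinate
  have hfin : ∀ (w : ℝ × ℝ → ℝ), Measurable w → (∀ p, w p ≤ |p.2|) →
      IsFiniteMeasure (μ.withDensity (fun s => ENNReal.ofReal (w (s 0)))) := by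
    intro w hwmeas hwabs
    constructor
    rw [MeasureTheory.withDensity_apply _ MeasurableSet.univ, Measure.restrict_univ]
    calc ∫⁻ s, ENNReal.ofReal (w (s 0)) ∂μ ≤ ∫⁻ s, (‖(s 0).2‖₊ : ENNReal) ∂μ := by
          refine lintegral_mono fun s => ?_
          rw [← ENNReal.ofReal_coe_nnreal, coe_nnnorm, Real.norm_eq_abs]
          exact ENNReal.ofReal_le_ofReal (hwabs (s 0))
      _ < ⊤ := hY.2
  -- evaluation of `ρ0`
  have E0 : ∀ A : Set ℝ, MeasurableSet A →
      ∫ s, A.indicator (fun _ => (1:ℝ)) ((s 0).1) ∂μ = (ρ0 A).toReal := by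
    intro A hA
    rw [hρ0, Measure.map_apply hX0m hA]
    have heq : (fun s : ℕ → ℝ × ℝ => A.indicator (fun _ => (1:ℝ)) ((s 0).1))
        = ((fun s' : ℕ → ℝ × ℝ => (s' 0).1) ⁻¹' A).indicator (fun _ => (1:ℝ)) := by
      funext s
      by_cases h : (s 0).1 ∈ A <;> simp [Set.indicator, h]
    rw [heq, integral_indicator_const (1:ℝ) (hX0m hA), smul_eq_mul, mul_one, measureReal_def]
  -- evaluation of the weighted measures
  have Ew : ∀ (w : ℝ × ℝ → ℝ), Measurable w → (∀ p, 0 ≤ w p) →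
      ∀ A : Set ℝ, MeasurableSet A →
      ∫ s, A.indicator (fun _ => w (s 0)) ((s 0).1) ∂μ
        = (((μ.withDensity (fun s => ENNReal.ofReal (w (s 0)))).map
            (fun s' => (s' 0).1)) A).toReal := by
    intro w hwmeas hw0 A hA
    have hwm0 : Measurable (fun s : ℕ → ℝ × ℝ => w (s 0)) :=
      hwmeas.comp (measurable_pi_apply 0)
    have hpre : MeasurableSet ((fun s' : ℕ → ℝ × ℝ => (s' 0).1) ⁻¹' A) := hX0m hA
    have heq : (fun s : ℕ → ℝ × ℝ => A.indicator (fun _ => w (s 0)) ((s 0).1))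
        = ((fun s' : ℕ → ℝ × ℝ => (s' 0).1) ⁻¹' A).indicator (fun s => w (s 0)) := by
      funext s
      by_cases h : (s 0).1 ∈ A <;> simp [Set.indicator, h]
    rw [Measure.map_apply hX0m hA, MeasureTheory.withDensity_apply _ hpre, heq]
    rw [integral_eq_lintegral_of_nonneg_ae
      (Filter.Eventually.of_forall fun s => Set.indicator_nonneg (fun _ _ => hw0 _) _)
      ((hwm0.indicator hpre).aestronglyMeasurable)]
    congr 1
    rw [← lintegral_indicator hpre]
    congr 1
    funext s
    by_cases h : s ∈ (fun s' : ℕ → ℝ × ℝ => (s' 0).1) ⁻¹' A <;> simp [Set.indicator, h]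
  -- integrability of the weighted indicator functions
  have hIw : ∀ (w : ℝ × ℝ → ℝ), Measurable w → (∀ p, 0 ≤ w p) → (∀ p, w p ≤ |p.2|) →
      ∀ A : Set ℝ, MeasurableSet A →
      Integrable (fun s => A.indicator (fun _ => w (s 0)) ((s 0).1)) μ := by
    intro w hwmeas hw0 hwabs A hA
    have hwm0 : Measurable (fun s : ℕ → ℝ × ℝ => w (s 0)) :=
      hwmeas.comp (measurable_pi_apply 0)
    have heq : (fun s : ℕ → ℝ × ℝ => A.indicator (fun _ => w (s 0)) ((s 0).1))
        = ((fun s' : ℕ → ℝ × ℝ => (s' 0).1) ⁻¹' A).indicator (fun s => w (s 0)) := by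
      funext s
      by_cases h : (s 0).1 ∈ A <;> simp [Set.indicator, h]
    rw [heq]
    refine hY.abs.mono' ((hwm0.indicator (hX0m hA)).aestronglyMeasurable)
      (Filter.Eventually.of_forall fun s => ?_)
    rw [Real.norm_eq_abs, abs_of_nonneg (Set.indicator_nonneg (fun x _ => hw0 (x 0)) _)]
    by_cases h : s ∈ (fun s' : ℕ → ℝ × ℝ => (s' 0).1) ⁻¹' A
    · rw [Set.indicator_of_mem h]; exact hwabs (s 0)
    · rw [Set.indicator_of_notMem h]; exact abs_nonneg _
  set wp : ℝ × ℝ → ℝ := fun p => max p.2 0 with hwp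
  set wm : ℝ × ℝ → ℝ := fun p => max (-p.2) 0 with hwm
  have hwpm : Measurable wp := measurable_snd.max measurable_const
  have hwmm : Measurable wm := measurable_snd.neg.max measurable_const
  have hwp0 : ∀ p : ℝ × ℝ, 0 ≤ wp p := fun p => le_max_right _ _
  have hwm0 : ∀ p : ℝ × ℝ, 0 ≤ wm p := fun p => le_max_right _ _
  have hwpabs : ∀ p : ℝ × ℝ, wp p ≤ |p.2| := fun p => max_le (le_abs_self _) (abs_nonneg _)
  have hwmabs : ∀ p : ℝ × ℝ, wm p ≤ |p.2| := fun p => max_le (neg_le_abs _) (abs_nonneg _)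
  haveI hfinp := hfin wp hwpm hwpabs
  haveI hfinm := hfin wm hwmm hwmabs
  set ρp : Measure ℝ := (μ.withDensity (fun s => ENNReal.ofReal (wp (s 0)))).map
    (fun s' => (s' 0).1) with hρp
  set ρm : Measure ℝ := (μ.withDensity (fun s => ENNReal.ofReal (wm (s 0)))).map
    (fun s' => (s' 0).1) with hρm
  haveI : IsFiniteMeasure ρp := by rw [hρp]; infer_instance
  haveI : IsFiniteMeasure ρm := by rw [hρm]; infer_instance
  -- the signed measure identity
  have E3 : ∀ A : Set ℝ, MeasurableSet A →
      nuM ρ0 m A = (ρp A).toReal - (ρm A).toReal := by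
    intro A hA
    have h1 : nuM ρ0 m A = ∫ s, A.indicator (fun _ => (s 0).2) ((s 0).1) ∂μ := hmVersion A hA
    have h2 : (fun s : ℕ → ℝ × ℝ => A.indicator (fun _ => (s 0).2) ((s 0).1))
        = fun s => A.indicator (fun _ => wp (s 0)) ((s 0).1)
            - A.indicator (fun _ => wm (s 0)) ((s 0).1) := by
      funext s
      by_cases h : (s 0).1 ∈ A
      · simp only [Set.indicator_of_mem h, hwp, hwm]
        exact (max_zero_sub_max_neg_zero_eq_self ((s 0).2)).symm
      · simp [Set.indicator_of_notMem h]
    rw [h1, h2, integral_sub (hIw wp hwpm hwp0 hwpabs A hA) (hIw wm hwmm hwm0 hwmabs A hA),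
      Ew wp hwpm hwp0 A hA, Ew wm hwmm hwm0 A hA, ← hρp, ← hρm]
  -- Birkhoff applications
  have hBgen : ∀ (F : (ℕ → ℝ × ℝ) → ℝ) (c : ℝ), Measurable F → Integrable F μ →
      ∫ s, F s ∂μ = c → ∀ᵐ s ∂μ,
      Tendsto (fun n => (∑ i ∈ Finset.range n, F (fun j => s (j + i))) / n) atTop (nhds c) := by
    intro F c hFm hFi hFc
    have hb := ErgodicAux.birkhoff_ergodic herg hFm hFi
    rw [hFc] at hb
    filter_upwards [hb] with s hs
    refine hs.congr fun n => ?_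
    rw [birkhoffAverage, smul_eq_mul, inv_mul_eq_div]
    congr 1
    refine Finset.sum_congr rfl fun i _ => ?_
    congr 1
    funext j
    exact ErgodicAux.shiftSeq_iter i s j
  have hB0 : ∀ A : Set ℝ, MeasurableSet A → ∀ᵐ s ∂μ,
      Tendsto (fun n => (∑ i ∈ Finset.range n,
        A.indicator (fun _ => (1:ℝ)) ((s i).1)) / n) atTop (nhds (ρ0 A).toReal) := by
    intro A hA
    have hFm : Measurable (fun s : ℕ → ℝ × ℝ => A.indicator (fun _ => (1:ℝ)) ((s 0).1)) := by
      have heq : (fun s : ℕ → ℝ × ℝ => A.indicator (fun _ => (1:ℝ)) ((s 0).1))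
          = ((fun s' : ℕ → ℝ × ℝ => (s' 0).1) ⁻¹' A).indicator (fun _ => (1:ℝ)) := by
        funext s
        by_cases h : (s 0).1 ∈ A <;> simp [Set.indicator, h]
      rw [heq]
      exact measurable_const.indicator (hX0m hA)
    have hFi : Integrable (fun s : ℕ → ℝ × ℝ => A.indicator (fun _ => (1:ℝ)) ((s 0).1)) μ := by
      refine (integrable_const (1:ℝ)).mono' hFm.aestronglyMeasurable
        (Filter.Eventually.of_forall fun s => ?_)
      rw [Real.norm_eq_abs]
      by_cases h : (s 0).1 ∈ A <;> simp [Set.indicator, h]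
    filter_upwards [hBgen _ _ hFm hFi (E0 A hA)] with s hs
    refine hs.congr fun n => ?_
    congr 1
    refine Finset.sum_congr rfl fun i _ => ?_
    norm_num
  have hBw : ∀ (w : ℝ × ℝ → ℝ), Measurable w → (∀ p, 0 ≤ w p) → (∀ p, w p ≤ |p.2|) →
      ∀ A : Set ℝ, MeasurableSet A → ∀ᵐ s ∂μ,
      Tendsto (fun n => (∑ i ∈ Finset.range n,
          A.indicator (fun _ => w (s i)) ((s i).1)) / n) atTop
        (nhds ((((μ.withDensity (fun s => ENNReal.ofReal (w (s 0)))).map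
            (fun s' => (s' 0).1)) A).toReal)) := by
    intro w hwmeas hw0 hwabs A hA
    have hFm : Measurable (fun s : ℕ → ℝ × ℝ => A.indicator (fun _ => w (s 0)) ((s 0).1)) := by
      have heq : (fun s : ℕ → ℝ × ℝ => A.indicator (fun _ => w (s 0)) ((s 0).1))
          = ((fun s' : ℕ → ℝ × ℝ => (s' 0).1) ⁻¹' A).indicator (fun s => w (s 0)) := by
        funext s
        by_cases h : (s 0).1 ∈ A <;> simp [Set.indicator, h]
      rw [heq]
      exact (hwmeas.comp (measurable_pi_apply 0)).indicator (hX0m hA)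
    filter_upwards [hBgen _ _ hFm (hIw w hwmeas hw0 hwabs A hA)
      (Ew w hwmeas hw0 A hA)] with s hs
    refine hs.congr fun n => ?_
    congr 1
    refine Finset.sum_congr rfl fun i _ => ?_
    norm_num
  -- countable threshold set
  set D : Set ℝ := {t | (∃ q : ℚ, (q : ℝ) = t) ∨ ρ0 {t} ≠ 0 ∨ ρp {t} ≠ 0 ∨ ρm {t} ≠ 0} with hDdef
  have hDc : D.Countable := by
    have h1 : D ⊆ Set.range (fun q : ℚ => (q : ℝ)) ∪ ({t : ℝ | ρ0 {t} ≠ 0}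
        ∪ ({t : ℝ | ρp {t} ≠ 0} ∪ {t : ℝ | ρm {t} ≠ 0})) := by
      rintro t (h | h | h | h)
      · exact Or.inl h
      · exact Or.inr (Or.inl h)
      · exact Or.inr (Or.inr (Or.inl h))
      · exact Or.inr (Or.inr (Or.inr h))
    exact Set.Countable.mono h1 ((Set.countable_range _).union
      ((ErgodicAux.countable_atoms ρ0).union
        ((ErgodicAux.countable_atoms ρp).union (ErgodicAux.countable_atoms ρm))))
  have hDQ : ∀ q : ℚ, (q : ℝ) ∈ D := fun q => Or.inl ⟨q, rfl⟩
  -- the a.e. event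
  have hgoal : ∀ᵐ s ∂μ, ∀ d ∈ D,
      (Tendsto (fun n => (∑ i ∈ Finset.range n,
          (Iic d).indicator (fun _ => (1:ℝ)) ((s i).1)) / n) atTop (nhds (ρ0 (Iic d)).toReal)) ∧
      (Tendsto (fun n => (∑ i ∈ Finset.range n,
          (Iio d).indicator (fun _ => (1:ℝ)) ((s i).1)) / n) atTop (nhds (ρ0 (Iio d)).toReal)) ∧
      (Tendsto (fun n => (∑ i ∈ Finset.range n,
          (Iic d).indicator (fun _ => wp (s i)) ((s i).1)) / n) atTop
        (nhds (ρp (Iic d)).toReal)) ∧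
      (Tendsto (fun n => (∑ i ∈ Finset.range n,
          (Iio d).indicator (fun _ => wp (s i)) ((s i).1)) / n) atTop
        (nhds (ρp (Iio d)).toReal)) ∧
      (Tendsto (fun n => (∑ i ∈ Finset.range n,
          (Iic d).indicator (fun _ => wm (s i)) ((s i).1)) / n) atTop
        (nhds (ρm (Iic d)).toReal)) ∧
      (Tendsto (fun n => (∑ i ∈ Finset.range n,
          (Iio d).indicator (fun _ => wm (s i)) ((s i).1)) / n) atTop
        (nhds (ρm (Iio d)).toReal)) := by
    rw [MeasureTheory.ae_ball_iff hDc]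
    intro d hd
    filter_upwards [hB0 (Iic d) measurableSet_Iic, hB0 (Iio d) measurableSet_Iio,
      hBw wp hwpm hwp0 hwpabs (Iic d) measurableSet_Iic,
      hBw wp hwpm hwp0 hwpabs (Iio d) measurableSet_Iio,
      hBw wm hwmm hwm0 hwmabs (Iic d) measurableSet_Iic,
      hBw wm hwmm hwm0 hwmabs (Iio d) measurableSet_Iio] with s h1 h2 h3 h4 h5 h6
    exact ⟨h1, h2, h3, h4, h5, h6⟩
  -- conclusion
  filter_upwards [hgoal] with s hs
  have hDatom0 : ∀ t : ℝ, ρ0 {t} ≠ 0 → t ∈ D := fun t h => Or.inr (Or.inl h)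
  have hDatomp : ∀ t : ℝ, ρp {t} ≠ 0 → t ∈ D := fun t h => Or.inr (Or.inr (Or.inl h))
  have hDatomm : ∀ t : ℝ, ρm {t} ≠ 0 → t ∈ D := fun t h => Or.inr (Or.inr (Or.inr h))
  have h0 : ∀ t : ℝ,
      Tendsto (fun n => (∑ i ∈ Finset.range n,
        (Iic t).indicator (fun _ => (1:ℝ)) ((s i).1)) / n) atTop (nhds (ρ0 (Iic t)).toReal) ∧
      Tendsto (fun n => (∑ i ∈ Finset.range n,
        (Iio t).indicator (fun _ => (1:ℝ)) ((s i).1)) / n) atTop (nhds (ρ0 (Iio t)).toReal) :=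
    ErgodicAux.extend_tendsto ρ0
      (V := fun n A => (∑ i ∈ Finset.range n, A.indicator (fun _ => (1:ℝ)) ((s i).1)) / n)
      (fun n A B hAB => ErgodicAux.sum_div_indicator_mono (fun i => (s i).1)
        (fun _ => (1:ℝ)) (fun _ => zero_le_one) n A B hAB)
      hDQ hDatom0 (fun d hd => ⟨(hs d hd).1, (hs d hd).2.1⟩)
  have hp : ∀ t : ℝ,
      Tendsto (fun n => (∑ i ∈ Finset.range n,
        (Iic t).indicator (fun _ => wp (s i)) ((s i).1)) / n) atTop
        (nhds (ρp (Iic t)).toReal) ∧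
      Tendsto (fun n => (∑ i ∈ Finset.range n,
        (Iio t).indicator (fun _ => wp (s i)) ((s i).1)) / n) atTop
        (nhds (ρp (Iio t)).toReal) :=
    ErgodicAux.extend_tendsto ρp
      (V := fun n A => (∑ i ∈ Finset.range n, A.indicator (fun _ => wp (s i)) ((s i).1)) / n)
      (fun n A B hAB => ErgodicAux.sum_div_indicator_mono (fun i => (s i).1)
        (fun i => wp (s i)) (fun i => hwp0 (s i)) n A B hAB)
      hDQ hDatomp (fun d hd => ⟨(hs d hd).2.2.1, (hs d hd).2.2.2.1⟩)
  have hm' : ∀ t : ℝ,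
      Tendsto (fun n => (∑ i ∈ Finset.range n,
        (Iic t).indicator (fun _ => wm (s i)) ((s i).1)) / n) atTop
        (nhds (ρm (Iic t)).toReal) ∧
      Tendsto (fun n => (∑ i ∈ Finset.range n,
        (Iio t).indicator (fun _ => wm (s i)) ((s i).1)) / n) atTop
        (nhds (ρm (Iio t)).toReal) :=
    ErgodicAux.extend_tendsto ρm
      (V := fun n A => (∑ i ∈ Finset.range n, A.indicator (fun _ => wm (s i)) ((s i).1)) / n)
      (fun n A B hAB => ErgodicAux.sum_div_indicator_mono (fun i => (s i).1)
        (fun i => wm (s i)) (fun i => hwm0 (s i)) n A B hAB)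
      hDQ hDatomm (fun d hd => ⟨(hs d hd).2.2.2.2.1, (hs d hd).2.2.2.2.2⟩)
  have hsplit : ∀ (A : Set ℝ) (n : ℕ), nuHat (fun i => (s i).1) (fun i => (s i).2) n A
      = (∑ i ∈ Finset.range n, A.indicator (fun _ => wp (s i)) ((s i).1)) / n
        - (∑ i ∈ Finset.range n, A.indicator (fun _ => wm (s i)) ((s i).1)) / n := by
    intro A n
    exact ErgodicAux.sum_indicator_split (fun i => (s i).1) (fun i => (s i).2) A n
  refine ⟨fun t => (h0 t).1, fun t => ?_, fun t => ?_, fun t => ?_⟩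
  · -- muHat at the singleton
    have h := ((h0 t).1.sub (h0 t).2)
    rw [← ErgodicAux.toReal_singleton ρ0 t] at h
    refine h.congr fun n => ?_
    exact (ErgodicAux.sum_indicator_singleton_eq (fun i => (s i).1)
      (fun _ => (1:ℝ)) t n).symm
  · -- nuHat at `Iic t`
    rw [show nuM ρ0 m (Iic t) = (ρp (Iic t)).toReal - (ρm (Iic t)).toReal from
      E3 (Iic t) measurableSet_Iic]
    exact ((hp t).1.sub (hm' t).1).congr fun n => (hsplit (Iic t) n).symm
  · -- nuHat at the singleton
    rw [show nuM ρ0 m {t} = (ρp {t}).toReal - (ρm {t}).toReal from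
      E3 {t} (measurableSet_singleton t), ErgodicAux.toReal_singleton ρp t,
      ErgodicAux.toReal_singleton ρm t]
    refine (((hp t).1.sub (hp t).2).sub ((hm' t).1.sub (hm' t).2)).congr fun n => ?_
    rw [← ErgodicAux.sum_indicator_singleton_eq (fun i => (s i).1)
        (fun i => wp (s i)) t n,
      ← ErgodicAux.sum_indicator_singleton_eq (fun i => (s i).1)
        (fun i => wm (s i)) t n]
    exact (hsplit ({t} : Set ℝ) n).symm
end
end

section
/- Let μ be a Borel probability measure on ℝ, m : ℝ → ℝ Borel measurable with ∫|m| dμ < ∞, and let (x,y) ∈ Ω(μ,m) with y_i ∈ {0,1} for all i. Then sup_{A ∈ 𝒜} |ν̂_n(A) − ν(A)| → 0 as n → ∞, where 𝒜 is the collection of all intervals of the form (a,b] and (−∞,b] with a, b ∈ ℝ. -/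
open MeasureTheory Filter Set

noncomputable section

/-- `λ`, the uniform distribution on `[0,1]`. -/
def unifMeasure : Measure ℝ := volume.restrict (Icc 0 1)

/-- The class `𝒜` of all intervals of the form `(a,b]` and `(−∞,b]`. -/
def intervalClass : Set (Set ℝ) :=
  { A | (∃ a b : ℝ, A = Ioc a b) ∨ (∃ b : ℝ, A = Iic b) }

/-! ### Auxiliary lemmas -/

lemma gcdiv {a b c : ℝ} (h : a ≤ b) (hc : 0 ≤ c) : a / c ≤ b / c := by
  rw [div_eq_mul_inv, div_eq_mul_inv]
  exact mul_le_mul_of_nonneg_right h (inv_nonneg.mpr hc)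

lemma nuHat_empty (x y : ℕ → ℝ) (n : ℕ) : nuHat x y n (∅ : Set ℝ) = 0 := by
  simp [nuHat]

lemma nuHat_nonneg (x y : ℕ → ℝ) (h0 : ∀ i, 0 ≤ y i) (n : ℕ) (A : Set ℝ) :
    0 ≤ nuHat x y n A :=
  div_nonneg (Finset.sum_nonneg fun i _ => Set.indicator_nonneg (fun _ _ => h0 i) _)
    (Nat.cast_nonneg n)

lemma nuHat_mono_set (x y : ℕ → ℝ) (h0 : ∀ i, 0 ≤ y i) (n : ℕ) {A B : Set ℝ} (h : A ⊆ B) :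
    nuHat x y n A ≤ nuHat x y n B :=
  gcdiv (Finset.sum_le_sum fun i _ =>
    Set.indicator_le_indicator_apply_of_subset h (h0 i)) (Nat.cast_nonneg n)

lemma nuHat_le_nuHat (x y y' : ℕ → ℝ) (h : ∀ i, y i ≤ y' i) (n : ℕ) (A : Set ℝ) :
    nuHat x y n A ≤ nuHat x y' n A :=
  gcdiv (Finset.sum_le_sum fun i _ =>
    Set.indicator_le_indicator (s := A) (h i)) (Nat.cast_nonneg n)

lemma nuHat_union (x y : ℕ → ℝ) (n : ℕ) {A B : Set ℝ} (hd : Disjoint A B) :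
    nuHat x y n (A ∪ B) = nuHat x y n A + nuHat x y n B := by
  unfold nuHat
  rw [← add_div, ← Finset.sum_add_distrib]
  congr 1
  exact Finset.sum_congr rfl fun i _ => by
    rw [Set.indicator_union_of_disjoint hd]

lemma nuHat_le_one (x y : ℕ → ℝ) (h1 : ∀ i, y i ≤ 1) (n : ℕ) (A : Set ℝ) :
    nuHat x y n A ≤ 1 := by
  rcases Nat.eq_zero_or_pos n with rfl | hn
  · simp [nuHat]
  · rw [nuHat, div_le_one (by exact_mod_cast hn)]
    calc (∑ i ∈ Finset.range n, A.indicator (fun _ => y i) (x i))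
        ≤ ∑ i ∈ Finset.range n, 1 :=
          Finset.sum_le_sum fun i _ =>
            Set.indicator_apply_le' (fun _ => h1 i) (fun _ => zero_le_one)
      _ = n := by simp

lemma muHat_eq_nuHat (x : ℕ → ℝ) (n : ℕ) (A : Set ℝ) :
    muHat x n A = nuHat x (fun _ => (1 : ℝ)) n A := rfl

lemma nuM_union (μ : Measure ℝ) (m : ℝ → ℝ) (hmInt : Integrable m μ) {A B : Set ℝ}
    (hB : MeasurableSet B) (hd : Disjoint A B) :
    nuM μ m (A ∪ B) = nuM μ m A + nuM μ m B :=
  setIntegral_union hd hB hmInt.integrableOn hmInt.integrableOn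

lemma nuM_empty (μ : Measure ℝ) (m : ℝ → ℝ) : nuM μ m (∅ : Set ℝ) = 0 := by
  simp [nuM]

section Quantile
open ProbabilityTheory

variable (μ : Measure ℝ) [IsProbabilityMeasure μ]

lemma cdf_singleton_toReal (t : ℝ) :
    (μ {t}).toReal = cdf μ t - Function.leftLim (cdf μ) t := by
  conv_lhs => rw [← measure_cdf μ]
  rw [StieltjesFunction.measure_singleton]
  exact ENNReal.toReal_ofReal (sub_nonneg.mpr ((cdf μ).mono.leftLim_le le_rfl))

omit [IsProbabilityMeasure μ] in
lemma quantile_S_nonempty {c : ℝ} (hc1 : c < 1) : {t | c ≤ cdf μ t}.Nonempty := by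
  have h : ∀ᶠ t in atTop, c < cdf μ t :=
    (tendsto_cdf_atTop μ).eventually (eventually_gt_nhds hc1)
  obtain ⟨t, ht⟩ := h.exists
  exact ⟨t, ht.le⟩

omit [IsProbabilityMeasure μ] in
lemma quantile_S_bddBelow {c : ℝ} (hc0 : 0 < c) : BddBelow {t | c ≤ cdf μ t} := by
  have h : ∀ᶠ t in atBot, cdf μ t < c :=
    (tendsto_cdf_atBot μ).eventually (eventually_lt_nhds hc0)
  obtain ⟨t₀, ht₀⟩ := eventually_atBot.mp h
  refine ⟨t₀, fun u hu => ?_⟩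
  exact not_lt.mp fun hlt => absurd hu (not_le.mpr (ht₀ u hlt.le))

omit [IsProbabilityMeasure μ] in
lemma quantile_facts {c : ℝ} (hc0 : 0 < c) (hc1 : c < 1) :
    c ≤ cdf μ (sInf {t | c ≤ cdf μ t}) ∧
      Function.leftLim (cdf μ) (sInf {t | c ≤ cdf μ t}) ≤ c := by
  set S := {t | c ≤ cdf μ t} with hS
  have hne : S.Nonempty := quantile_S_nonempty μ hc1
  have hbdd : BddBelow S := quantile_S_bddBelow μ hc0
  constructor
  · have h_gt : ∀ t ∈ Ioi (sInf S), c ≤ cdf μ t := by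
      intro t ht
      obtain ⟨u, huS, hu⟩ := exists_lt_of_csInf_lt hne ht
      exact le_trans huS ((cdf μ).mono hu.le)
    exact ge_of_tendsto (((cdf μ).right_continuous (sInf S)).mono_left
        (nhdsWithin_mono _ Ioi_subset_Ici_self))
      (eventually_nhdsWithin_of_forall h_gt)
  · have h_lt : ∀ t ∈ Iio (sInf S), cdf μ t ≤ c := by
      intro t ht
      by_contra h
      exact not_le.mpr ht (csInf_le hbdd (le_of_not_ge h))
    exact le_of_tendsto ((cdf μ).mono.tendsto_leftLim (sInf S))
      (eventually_nhdsWithin_of_forall h_lt)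

end Quantile

open ProbabilityTheory in
/-- **Glivenko–Cantelli for the joint sample averages.** Let `μ` be a Borel
probability measure on `ℝ`, `m : ℝ → ℝ` Borel measurable with `∫|m| dμ < ∞`,
and `(x,y) ∈ Ω(μ,m)` with `y_i ∈ {0,1}`.  Then
`sup_{A ∈ 𝒜} |ν̂_n(A) − ν(A)| → 0` as `n → ∞`. -/
theorem glivenko_cantelli_regression_individual
    (μ : Measure ℝ) [IsProbabilityMeasure μ]
    (m : ℝ → ℝ) (hmMeas : Measurable m) (hmInt : Integrable m μ)
    (x y : ℕ → ℝ) (hxy : memOmega μ m x y) (hy : ∀ i, y i = 0 ∨ y i = 1) :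
    Tendsto (fun n => sSup ((fun A => |nuHat x y n A - nuM μ m A|) '' intervalClass))
      atTop (nhds 0) := by
  obtain ⟨hF, hFs, hG, hGs⟩ := hxy
  have hy0 : ∀ i, (0:ℝ) ≤ y i := fun i => by rcases hy i with h | h <;> simp [h]
  have hy1 : ∀ i, y i ≤ 1 := fun i => by rcases hy i with h | h <;> simp [h]
  -- hat identities
  have hatIio : ∀ (yy : ℕ → ℝ) (n : ℕ) (t : ℝ),
      nuHat x yy n (Iio t) = nuHat x yy n (Iic t) - nuHat x yy n {t} := by
    intro yy n t
    have hd : Disjoint (Iio t) {t} := by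
      simp [Set.disjoint_singleton_right]
    have h := nuHat_union x yy n hd
    rw [Iio_union_right] at h
    linarith
  have hatIoc : ∀ (yy : ℕ → ℝ) (n : ℕ) {a b : ℝ}, a ≤ b →
      nuHat x yy n (Ioc a b) = nuHat x yy n (Iic b) - nuHat x yy n (Iic a) := by
    intro yy n a b hab
    have hd : Disjoint (Iic a) (Ioc a b) := Iic_disjoint_Ioc le_rfl
    have h := nuHat_union x yy n hd
    rw [Iic_union_Ioc_eq_Iic hab] at h
    linarith
  have hatIoo : ∀ (yy : ℕ → ℝ) (n : ℕ) {a b : ℝ}, a < b →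
      nuHat x yy n (Ioo a b) = nuHat x yy n (Iio b) - nuHat x yy n (Iic a) := by
    intro yy n a b hab
    have hd : Disjoint (Iic a) (Ioo a b) :=
      (Iic_disjoint_Ioc le_rfl).mono_right Ioo_subset_Ioc_self
    have h := nuHat_union x yy n hd
    rw [Iic_union_Ioo_eq_Iio hab] at h
    linarith
  -- nuM identities
  have nuMIio : ∀ t : ℝ, nuM μ m (Iio t) = nuM μ m (Iic t) - nuM μ m {t} := by
    intro t
    have hd : Disjoint (Iio t) {t} := by
      simp [Set.disjoint_singleton_right]
    have h := nuM_union μ m hmInt (measurableSet_singleton t) hd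
    rw [Iio_union_right] at h
    linarith
  have nuMIoc : ∀ {a b : ℝ}, a ≤ b →
      nuM μ m (Ioc a b) = nuM μ m (Iic b) - nuM μ m (Iic a) := by
    intro a b hab
    have hd : Disjoint (Iic a) (Ioc a b) := Iic_disjoint_Ioc le_rfl
    have h := nuM_union μ m hmInt measurableSet_Ioc hd
    rw [Iic_union_Ioc_eq_Iic hab] at h
    linarith
  -- convergence statements in cdf form
  have hF' : ∀ t : ℝ, Tendsto (fun n => muHat x n (Iic t)) atTop (nhds (cdf μ t)) := by
    intro t
    rw [cdf_eq_real, measureReal_def]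
    exact hF t
  have hFs' : ∀ t : ℝ, Tendsto (fun n => muHat x n {t}) atTop
      (nhds (cdf μ t - Function.leftLim (cdf μ) t)) := by
    intro t
    rw [← cdf_singleton_toReal μ t]
    exact hFs t
  have hFio : ∀ t : ℝ, Tendsto (fun n => muHat x n (Iio t)) atTop
      (nhds (Function.leftLim (cdf μ) t)) := by
    intro t
    have h := (hF' t).sub (hFs' t)
    have h2 : cdf μ t - (cdf μ t - Function.leftLim (cdf μ) t)
        = Function.leftLim (cdf μ) t := by ring
    rw [h2] at h
    refine h.congr fun n => ?_
    simp only [muHat_eq_nuHat]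
    exact (hatIio _ n t).symm
  have hGio : ∀ t : ℝ, Tendsto (fun n => nuHat x y n (Iio t)) atTop
      (nhds (nuM μ m (Iio t))) := by
    intro t
    have h := (hG t).sub (hGs t)
    rw [← nuMIio t] at h
    exact h.congr fun n => (hatIio y n t).symm
  have hFio' : ∀ t : ℝ, Tendsto (fun n => nuHat x (fun _ => (1:ℝ)) n (Iio t)) atTop
      (nhds (Function.leftLim (cdf μ) t)) :=
    fun t => (hFio t).congr fun n => muHat_eq_nuHat x n _
  have hFic' : ∀ t : ℝ, Tendsto (fun n => nuHat x (fun _ => (1:ℝ)) n (Iic t)) atTop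
      (nhds (cdf μ t)) :=
    fun t => (hF' t).congr fun n => muHat_eq_nuHat x n _
  -- limit inequalities
  have hGnonneg : ∀ t : ℝ, 0 ≤ nuM μ m (Iic t) :=
    fun t => ge_of_tendsto' (hG t) fun n => nuHat_nonneg x y hy0 n _
  have hGmono : ∀ {a b : ℝ}, a ≤ b → nuM μ m (Iic a) ≤ nuM μ m (Iic b) :=
    fun h => le_of_tendsto_of_tendsto' (hG _) (hG _)
      fun n => nuHat_mono_set x y hy0 n (Iic_subset_Iic.mpr h)
  have hGleIio : ∀ {a b : ℝ}, a < b → nuM μ m (Iic a) ≤ nuM μ m (Iio b) :=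
    fun h => le_of_tendsto_of_tendsto' (hG _) (hGio _)
      fun n => nuHat_mono_set x y hy0 n (Iic_subset_Iio.mpr h)
  have hGioLe : ∀ s : ℝ, nuM μ m (Iio s) ≤ Function.leftLim (cdf μ) s := by
    intro s
    exact le_of_tendsto_of_tendsto' (hGio s) (hFio' s)
      fun n => nuHat_le_nuHat x y _ hy1 n _
  have hKey1 : ∀ {a b : ℝ}, a < b →
      nuM μ m (Iio b) - nuM μ m (Iic a) ≤ Function.leftLim (cdf μ) b - cdf μ a := by
    intro a b hab
    refine le_of_tendsto_of_tendsto' ((hGio b).sub (hG a))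
      ((hFio' b).sub (hFic' a)) ?_
    intro n
    have e1 := hatIoo y n hab
    have e2 := hatIoo (fun _ => (1:ℝ)) n hab
    have hle := nuHat_le_nuHat x y (fun _ => (1:ℝ)) hy1 n (Ioo a b)
    linarith
  have hKey2 : ∀ {a b : ℝ}, a ≤ b →
      nuM μ m (Iic b) - nuM μ m (Iic a) ≤ cdf μ b - cdf μ a := by
    intro a b hab
    refine le_of_tendsto_of_tendsto' ((hG b).sub (hG a))
      ((hFic' b).sub (hFic' a)) ?_
    intro n
    have e1 := hatIoc y n hab
    have e2 := hatIoc (fun _ => (1:ℝ)) n hab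
    have hle := nuHat_le_nuHat x y (fun _ => (1:ℝ)) hy1 n (Ioc a b)
    linarith
  -- main argument
  rw [NormedAddCommGroup.tendsto_nhds_zero]
  intro ε hε
  obtain ⟨k0, hk0⟩ := exists_nat_gt (4 / ε)
  set k : ℕ := k0 + 2 with hkdef
  clear_value k
  have hkpos : (0:ℝ) < (k:ℝ) := by
    have : 0 < k := by omega
    exact_mod_cast this
  have hinvk : 1 / (k:ℝ) < ε / 4 := by
    have hk0' : 4 / ε < (k:ℝ) := by
      have hk0k : k0 ≤ k := by omega
      have : (k0:ℝ) ≤ (k:ℝ) := by exact_mod_cast hk0k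
      linarith
    have h4 : 4 < (k:ℝ) * ε := by
      have := (div_lt_iff₀ hε).mp hk0'
      linarith
    rw [div_lt_div_iff₀ hkpos (by norm_num : (0:ℝ) < 4)]
    linarith
  have hinvknn : (0:ℝ) ≤ 1 / (k:ℝ) := by positivity
  -- quantiles
  set q : ℕ → ℝ := fun j => sInf {t | (j:ℝ)/(k:ℝ) ≤ cdf μ t} with hqdef
  clear_value q
  have hc0 : ∀ j : ℕ, 1 ≤ j → (0:ℝ) < (j:ℝ)/(k:ℝ) := by
    intro j hj
    apply div_pos _ hkpos
    exact_mod_cast hj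
  have hc1 : ∀ j : ℕ, j ≤ k - 1 → (j:ℝ)/(k:ℝ) < 1 := by
    intro j hj
    rw [div_lt_one hkpos]
    exact_mod_cast (by omega : j < k)
  have hqf : ∀ j : ℕ, 1 ≤ j → j ≤ k - 1 →
      ((j:ℝ)/(k:ℝ) ≤ cdf μ (q j) ∧ Function.leftLim (cdf μ) (q j) ≤ (j:ℝ)/(k:ℝ)) := by
    intro j h1 h2
    simp only [hqdef]
    exact quantile_facts μ (hc0 j h1) (hc1 j h2)
  have hqmono : ∀ i j : ℕ, 1 ≤ i → i ≤ j → j ≤ k - 1 → q i ≤ q j := by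
    intro i j h1 hij h2
    simp only [hqdef]
    refine csInf_le_csInf ?_ ?_ ?_
    · exact quantile_S_bddBelow μ (hc0 i h1)
    · exact quantile_S_nonempty μ (hc1 j h2)
    · intro u hu
      have hu' : (j:ℝ)/(k:ℝ) ≤ cdf μ u := hu
      exact le_trans (gcdiv (by exact_mod_cast hij) hkpos.le) hu'
  -- the error sequence
  set E : ℕ → ℝ := fun n =>
    (∑ j ∈ Finset.Icc 1 (k-1),
      (|nuHat x y n (Iio (q j)) - nuM μ m (Iio (q j))| +
       |nuHat x y n (Iic (q j)) - nuM μ m (Iic (q j))|)) +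
    |muHat x n (Iic (q (k-1))) - cdf μ (q (k-1))| with hEdef
  clear_value E
  have hEnonneg : ∀ n, 0 ≤ E n := by
    intro n
    simp only [hEdef]
    apply add_nonneg _ (abs_nonneg _)
    exact Finset.sum_nonneg fun j _ => add_nonneg (abs_nonneg _) (abs_nonneg _)
  have hEtend : Tendsto E atTop (nhds 0) := by
    have h1 : Tendsto (fun n => ∑ j ∈ Finset.Icc 1 (k-1),
        (|nuHat x y n (Iio (q j)) - nuM μ m (Iio (q j))| +
         |nuHat x y n (Iic (q j)) - nuM μ m (Iic (q j))|)) atTop (nhds 0) := by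
      have key : ∀ j ∈ Finset.Icc 1 (k-1), Tendsto (fun n : ℕ =>
          |nuHat x y n (Iio (q j)) - nuM μ m (Iio (q j))| +
          |nuHat x y n (Iic (q j)) - nuM μ m (Iic (q j))|) atTop (nhds 0) := by
        intro j _
        have hA := ((hGio (q j)).sub
          (tendsto_const_nhds (x := nuM μ m (Iio (q j))) (f := atTop))).abs
        have hB := ((hG (q j)).sub
          (tendsto_const_nhds (x := nuM μ m (Iic (q j))) (f := atTop))).abs
        simpa using hA.add hB
      have := tendsto_finset_sum (Finset.Icc 1 (k-1)) key
      simpa using this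
    have h2 : Tendsto (fun n => |muHat x n (Iic (q (k-1))) - cdf μ (q (k-1))|)
        atTop (nhds 0) := by
      have := ((hF' (q (k-1))).sub (tendsto_const_nhds (x := cdf μ (q (k-1))))).abs
      simpa using this
    rw [hEdef]
    simpa using h1.add h2
  have hEeps : ∀ᶠ n in atTop, E n < ε / 4 :=
    hEtend.eventually (eventually_lt_nhds (by linarith))
  filter_upwards [hEeps] with n hEn
  -- single-term bounds from E
  have hEio : ∀ j : ℕ, 1 ≤ j → j ≤ k - 1 →
      |nuHat x y n (Iio (q j)) - nuM μ m (Iio (q j))| ≤ E n := by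
    intro j h1 h2
    have hmem : j ∈ Finset.Icc 1 (k-1) := Finset.mem_Icc.mpr ⟨h1, h2⟩
    have hs := Finset.single_le_sum
      (f := fun j => |nuHat x y n (Iio (q j)) - nuM μ m (Iio (q j))| +
        |nuHat x y n (Iic (q j)) - nuM μ m (Iic (q j))|)
      (fun i _ => add_nonneg (abs_nonneg _) (abs_nonneg _)) hmem
    have := abs_nonneg (nuHat x y n (Iic (q j)) - nuM μ m (Iic (q j)))
    have := abs_nonneg (muHat x n (Iic (q (k-1))) - cdf μ (q (k-1)))
    simp only [hEdef]
    linarith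
  have hEic : ∀ j : ℕ, 1 ≤ j → j ≤ k - 1 →
      |nuHat x y n (Iic (q j)) - nuM μ m (Iic (q j))| ≤ E n := by
    intro j h1 h2
    have hmem : j ∈ Finset.Icc 1 (k-1) := Finset.mem_Icc.mpr ⟨h1, h2⟩
    have hs := Finset.single_le_sum
      (f := fun j => |nuHat x y n (Iio (q j)) - nuM μ m (Iio (q j))| +
        |nuHat x y n (Iic (q j)) - nuM μ m (Iic (q j))|)
      (fun i _ => add_nonneg (abs_nonneg _) (abs_nonneg _)) hmem
    have := abs_nonneg (nuHat x y n (Iio (q j)) - nuM μ m (Iio (q j)))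
    have := abs_nonneg (muHat x n (Iic (q (k-1))) - cdf μ (q (k-1)))
    simp only [hEdef]
    linarith
  have hEicF : |nuHat x y n (Iic (q (k-1))) - nuM μ m (Iic (q (k-1)))| +
      |muHat x n (Iic (q (k-1))) - cdf μ (q (k-1))| ≤ E n := by
    have hmem : k - 1 ∈ Finset.Icc 1 (k-1) := Finset.mem_Icc.mpr ⟨by omega, le_rfl⟩
    have hs := Finset.single_le_sum
      (f := fun j => |nuHat x y n (Iio (q j)) - nuM μ m (Iio (q j))| +
        |nuHat x y n (Iic (q j)) - nuM μ m (Iic (q j))|)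
      (fun i _ => add_nonneg (abs_nonneg _) (abs_nonneg _)) hmem
    have := abs_nonneg (nuHat x y n (Iio (q (k-1))) - nuM μ m (Iio (q (k-1))))
    simp only [hEdef]
    linarith
  -- the pointwise claim
  have claim : ∀ t : ℝ, |nuHat x y n (Iic t) - nuM μ m (Iic t)| ≤ E n + 1/(k:ℝ) := by
    intro t
    rcases lt_or_ge t (q 1) with hlow | hge1
    · -- low region
      have hio1 := hEio 1 le_rfl (by omega)
      have hL : Function.leftLim (cdf μ) (q 1) ≤ 1/(k:ℝ) := by
        have := (hqf 1 le_rfl (by omega)).2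
        simpa using this
      have h01 := nuHat_nonneg x y hy0 n (Iic t)
      have h02 := hGnonneg t
      have hm1 : nuHat x y n (Iic t) ≤ nuHat x y n (Iio (q 1)) :=
        nuHat_mono_set x y hy0 n (Iic_subset_Iio.mpr hlow)
      have hm2 : nuM μ m (Iic t) ≤ nuM μ m (Iio (q 1)) := hGleIio hlow
      have h3 : nuM μ m (Iio (q 1)) ≤ Function.leftLim (cdf μ) (q 1) := hGioLe (q 1)
      have hEnn := hEnonneg n
      have hchain : nuM μ m (Iic t) ≤ 1/(k:ℝ) := le_trans hm2 (le_trans h3 hL)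
      rw [abs_sub_le_iff]
      constructor
      · linarith only [hm1, (abs_le.mp hio1).2, h3, hL, h02, hEnn]
      · linarith only [hchain, h01, hEnn]
    · rcases le_or_gt (q (k-1)) t with hhigh | hmid
      · -- high region
        have e1 := hatIoc y n hhigh
        have e2 := hatIoc (fun _ => (1:ℝ)) n hhigh
        have hle := nuHat_le_nuHat x y (fun _ => (1:ℝ)) hy1 n (Ioc (q (k-1)) t)
        have em1 : muHat x n (Iic t) = nuHat x (fun _ => (1:ℝ)) n (Iic t) := rfl
        have em2 : muHat x n (Iic (q (k-1))) = nuHat x (fun _ => (1:ℝ)) n (Iic (q (k-1))) := rfl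
        have hμ1 : muHat x n (Iic t) ≤ 1 := by
          rw [muHat_eq_nuHat]
          exact nuHat_le_one x _ (fun _ => le_rfl) n _
        have hf1 : cdf μ t ≤ 1 := cdf_le_one μ t
        have hkey2a := hKey2 hhigh
        have hm2 : nuM μ m (Iic (q (k-1))) ≤ nuM μ m (Iic t) := hGmono hhigh
        have hm4 : nuHat x y n (Iic (q (k-1))) ≤ nuHat x y n (Iic t) :=
          nuHat_mono_set x y hy0 n (Iic_subset_Iic.mpr hhigh)
        have hqv : ((k-1:ℕ):ℝ)/(k:ℝ) ≤ cdf μ (q (k-1)) := (hqf (k-1) (by omega) le_rfl).1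
        have hcast : ((k-1:ℕ):ℝ) = (k:ℝ) - 1 := by
          have h1k : (1:ℕ) ≤ k := by omega
          push_cast [Nat.cast_sub h1k]
          ring
        have hdiv : ((k:ℝ) - 1)/(k:ℝ) = 1 - 1/(k:ℝ) := by
          field_simp
        rw [hcast, hdiv] at hqv
        have habs1 := abs_le.mp (hEicF.trans' (le_add_of_nonneg_right (abs_nonneg _)) |>.trans le_rfl)
        -- bounds for the two error terms
        have hb1 := le_abs_self (nuHat x y n (Iic (q (k-1))) - nuM μ m (Iic (q (k-1))))
        have hb1' := neg_abs_le (nuHat x y n (Iic (q (k-1))) - nuM μ m (Iic (q (k-1))))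
        have hb2 := le_abs_self (muHat x n (Iic (q (k-1))) - cdf μ (q (k-1)))
        have hb2' := neg_abs_le (muHat x n (Iic (q (k-1))) - cdf μ (q (k-1)))
        have hEnn := hEnonneg n
        rw [abs_sub_le_iff]
        constructor
        · linarith [hEicF]
        · linarith [hEicF]
      · -- middle region
        have hk3 : 3 ≤ k := by
          by_contra hcon
          have hk2' : k - 1 = 1 := by omega
          rw [hk2'] at hmid
          linarith
        have hTne : ((Finset.Icc 1 (k-2)).filter (fun j => q j ≤ t)).Nonempty :=
          ⟨1, Finset.mem_filter.mpr ⟨Finset.mem_Icc.mpr ⟨le_rfl, by omega⟩, hge1⟩⟩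
        set j := ((Finset.Icc 1 (k-2)).filter (fun j => q j ≤ t)).max' hTne with hjdef
        have hjmem := Finset.max'_mem _ hTne
        rw [← hjdef] at hjmem
        obtain ⟨hjIcc, hjle⟩ := Finset.mem_filter.mp hjmem
        obtain ⟨hj1, hjk⟩ := Finset.mem_Icc.mp hjIcc
        have hjsucc : t < q (j+1) := by
          rcases eq_or_lt_of_le hjk with heq | hlt
          · have hjkk : j + 1 = k - 1 := by omega
            rw [hjkk]
            exact hmid
          · by_contra hcon
            push_neg at hcon
            have hmem2 : j + 1 ∈ (Finset.Icc 1 (k-2)).filter (fun j => q j ≤ t) :=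
              Finset.mem_filter.mpr ⟨Finset.mem_Icc.mpr ⟨by omega, by omega⟩, hcon⟩
            have := Finset.le_max' _ (j+1) hmem2
            rw [← hjdef] at this
            omega
        have hj1k : j + 1 ≤ k - 1 := by omega
        have hqlt : q j < q (j+1) := lt_of_le_of_lt hjle hjsucc
        have hio := hEio (j+1) (by omega) hj1k
        have hic := hEic j hj1 (by omega)
        have hqfj := (hqf j hj1 (by omega)).1
        have hqfj1 := (hqf (j+1) (by omega) hj1k).2
        have hkey := hKey1 hqlt
        have hcast : ((j+1:ℕ):ℝ)/(k:ℝ) - ((j:ℕ):ℝ)/(k:ℝ) = 1/(k:ℝ) := by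
          rw [div_sub_div_same]
          push_cast
          ring_nf
        have hm1 : nuHat x y n (Iic t) ≤ nuHat x y n (Iio (q (j+1))) :=
          nuHat_mono_set x y hy0 n (Iic_subset_Iio.mpr hjsucc)
        have hm2 : nuM μ m (Iic (q j)) ≤ nuM μ m (Iic t) := hGmono hjle
        have hm3 : nuM μ m (Iic t) ≤ nuM μ m (Iio (q (j+1))) := hGleIio hjsucc
        have hm4 : nuHat x y n (Iic (q j)) ≤ nuHat x y n (Iic t) :=
          nuHat_mono_set x y hy0 n (Iic_subset_Iic.mpr hjle)
        rw [abs_sub_le_iff]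
        constructor
        · linarith [le_abs_self (nuHat x y n (Iio (q (j+1))) - nuM μ m (Iio (q (j+1))))]
        · linarith [neg_abs_le (nuHat x y n (Iic (q j)) - nuM μ m (Iic (q j)))]
  -- bound on intervals
  have hRHS0 : (0:ℝ) ≤ 2 * (E n + 1/(k:ℝ)) := by
    have := hEnonneg n
    linarith
  have hAbound : ∀ A ∈ intervalClass, |nuHat x y n A - nuM μ m A| ≤ 2 * (E n + 1/(k:ℝ)) := by
    rintro A (⟨a, b, rfl⟩ | ⟨b, rfl⟩)
    · rcases le_or_gt a b with hab | hba
      · rw [hatIoc y n hab, nuMIoc hab, abs_le]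
        constructor <;>
          linarith [(abs_le.mp (claim a)).1, (abs_le.mp (claim a)).2,
            (abs_le.mp (claim b)).1, (abs_le.mp (claim b)).2]
      · rw [Set.Ioc_eq_empty (not_lt.mpr hba.le), nuHat_empty, nuM_empty]
        simpa using hRHS0
    · refine (claim b).trans ?_
      have := hEnonneg n
      linarith
  -- conclude via sSup
  have hub : ∀ z ∈ (fun A => |nuHat x y n A - nuM μ m A|) '' intervalClass,
      z ≤ 2 * (E n + 1/(k:ℝ)) := by
    rintro z ⟨A, hA, rfl⟩
    exact hAbound A hA
  have hle : sSup ((fun A => |nuHat x y n A - nuM μ m A|) '' intervalClass)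
      ≤ 2 * (E n + 1/(k:ℝ)) := Real.sSup_le hub hRHS0
  have hmemIic : Iic (0:ℝ) ∈ intervalClass := Or.inr ⟨0, rfl⟩
  have hge : (0:ℝ) ≤ sSup ((fun A => |nuHat x y n A - nuM μ m A|) '' intervalClass) := by
    have hmem : |nuHat x y n (Iic (0:ℝ)) - nuM μ m (Iic 0)| ∈
        (fun A => |nuHat x y n A - nuM μ m A|) '' intervalClass := ⟨Iic 0, hmemIic, rfl⟩
    exact le_trans (abs_nonneg _) (le_csSup ⟨2 * (E n + 1/(k:ℝ)), hub⟩ hmem)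
  rw [Real.norm_eq_abs, abs_of_nonneg hge]
  linarith
end
end

section
/- Let μ be a Borel probability measure on ℝ, let f : ℝ → ℝ have finite total variation V(f:−i,i) on (−i,i] and be μ-integrable, let k ≥ 1, and suppose every dyadic cell A ∈ π_k with A ⊆ (−i,i] satisfies μ(A) > 0. Define the conditional averaging (f ∘ π_k)(t) = (1/μ(π_k[t])) ∫_{π_k[t]} f dμ. Then V(f ∘ π_k : −i, i) ≤ 3·V(f : −i, i). -/
open MeasureTheory Filter Set

noncomputable section

/-- The set of sums `∑_{i=1}^n |h(t_i) − h(t_{i−1})|` over finite sequences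
`a < t_0 < t_1 < ⋯ < t_n = b`. -/
def vSums (h : ℝ → ℝ) (a b : ℝ) : Set ℝ :=
  { s | ∃ (n : ℕ) (t : ℕ → ℝ), (∀ i < n, t i < t (i + 1)) ∧ a < t 0 ∧ t n = b ∧
        s = ∑ i ∈ Finset.range n, |h (t (i + 1)) - h (t i)| }

/-- Total variation `V(h : a, b)` of `h` on `(a, b]`. -/
def totalVar (h : ℝ → ℝ) (a b : ℝ) : ℝ := sSup (vSums h a b)

/-- The dyadic cell `A_{k,j} = ((j−1)·2^{−k}, j·2^{−k}]` of the partition `π_k`. -/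
def dCell (k : ℕ) (j : ℤ) : Set ℝ := Ioc (((j : ℝ) - 1) / 2 ^ k) ((j : ℝ) / 2 ^ k)

/-- For `k ≥ 1`, the cell `π_k[t]` of the dyadic partition `π_k` containing `t`. -/
def dyadCell (k : ℕ) (t : ℝ) : Set ℝ :=
  Ioc (((⌈t * 2 ^ k⌉ : ℝ) - 1) / 2 ^ k) ((⌈t * 2 ^ k⌉ : ℝ) / 2 ^ k)

/-- The conditional averaging `(f ∘ π_k)(t) = (1/μ(π_k[t])) ∫_{π_k[t]} f dμ`. -/
def condAvg (μ : Measure ℝ) (f : ℝ → ℝ) (k : ℕ) (t : ℝ) : ℝ :=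
  (∫ z in dyadCell k t, f z ∂μ) / (μ (dyadCell k t)).toReal

namespace CondAvgAux

lemma sum_range_two_mul {M : Type*} [AddCommMonoid M] (r : ℕ) (G : ℕ → M) :
    ∑ q ∈ Finset.range (2 * r), G q = ∑ l ∈ Finset.range r, (G (2 * l) + G (2 * l + 1)) := by
  induction r with
  | zero => simp
  | succ r ih =>
    have h2 : 2 * (r + 1) = (2 * r + 1) + 1 := by ring
    rw [h2, Finset.sum_range_succ, Finset.sum_range_succ, ih, Finset.sum_range_succ, add_assoc]

lemma mono_of_steps (t : ℕ → ℝ) (n : ℕ) (h : ∀ m < n, t m ≤ t (m + 1)) :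
    ∀ u v, u ≤ v → v ≤ n → t u ≤ t v := by
  intro u v huv hvn
  induction v, huv using Nat.le_induction with
  | base => exact le_rfl
  | succ v hv ih =>
    exact le_trans (ih (by omega)) (h v (by omega))

/-- Monotone enumeration of a finite set of naturals. -/
lemma enum (S : Finset ℕ) : ∃ E : ℕ → ℕ,
    (∀ l < S.card, E l ∈ S) ∧
    (∀ l l', l < S.card → l' < S.card → (E l < E l' ↔ l < l')) ∧
    (∀ m ∈ S, ∃ l < S.card, E l = m) ∧
    (∀ (H : ℕ → ℝ), ∑ m ∈ S, H m = ∑ l ∈ Finset.range S.card, H (E l)) := by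
  classical
  set r := S.card with hr
  set e := S.orderEmbOfFin hr.symm with he
  refine ⟨fun l => if h : l < r then e ⟨l, h⟩ else 0, ?_, ?_, ?_, ?_⟩
  · intro l hl
    simp only [dif_pos hl]
    exact S.orderEmbOfFin_mem hr.symm ⟨l, hl⟩
  · intro l l' hl hl'
    simp only [dif_pos hl, dif_pos hl']
    rw [OrderEmbedding.lt_iff_lt]
    exact Iff.rfl
  · intro m hm
    have : m ∈ Set.range e := by
      rw [he, Finset.range_orderEmbOfFin]
      exact hm
    obtain ⟨l, hl⟩ := this
    exact ⟨l.val, l.isLt, by simp only [dif_pos l.isLt, Fin.eta]; exact hl⟩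
  · intro H
    have himg : S = (Finset.range r).image (fun l => if h : l < r then e ⟨l, h⟩ else 0) := by
      ext m
      simp only [Finset.mem_image, Finset.mem_range]
      constructor
      · intro hm
        have : m ∈ Set.range e := by rw [he, Finset.range_orderEmbOfFin]; exact hm
        obtain ⟨l, hl⟩ := this
        exact ⟨l.val, l.isLt, by simp only [dif_pos l.isLt, Fin.eta]; exact hl⟩
      · rintro ⟨l, hl, rfl⟩
        simp only [dif_pos hl]
        exact S.orderEmbOfFin_mem hr.symm ⟨l, hl⟩
    rw [himg, Finset.sum_image]
    intro u hu v hv huv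
    simp only [Finset.mem_coe, Finset.mem_range] at hu hv
    simp only [dif_pos hu, dif_pos hv] at huv
    exact congrArg Fin.val (e.injective huv)

lemma zero_mem_vSums (h : ℝ → ℝ) (a b : ℝ) (hab : a < b) : (0 : ℝ) ∈ vSums h a b :=
  ⟨0, fun _ => b, by intro i hi; omega, hab, rfl, by simp⟩

lemma totalVar_nonneg (h : ℝ → ℝ) (a b : ℝ) (hab : a < b) (hBV : BddAbove (vSums h a b)) :
    0 ≤ totalVar h a b :=
  le_csSup hBV (zero_mem_vSums h a b hab)

lemma sum_strict_le (f : ℝ → ℝ) (a b : ℝ) (hBV : BddAbove (vSums f a b))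
    (n : ℕ) (t : ℕ → ℝ) (hst : ∀ m < n, t m < t (m + 1)) (h0 : a < t 0) (hn : t n ≤ b) :
    ∑ m ∈ Finset.range n, |f (t (m + 1)) - f (t m)| ≤ totalVar f a b := by
  rcases eq_or_lt_of_le hn with heq | hlt
  · exact le_csSup hBV ⟨n, t, hst, h0, heq, rfl⟩
  · set t' : ℕ → ℝ := fun q => if q ≤ n then t q else b with ht'
    have hmem : (∑ m ∈ Finset.range (n + 1), |f (t' (m + 1)) - f (t' m)|) ∈ vSums f a b := by
      refine ⟨n + 1, t', ?_, ?_, ?_, rfl⟩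
      · intro m hm
        rcases Nat.lt_or_ge m n with h | h
        · simp only [ht', if_pos (by omega : m ≤ n), if_pos (by omega : m + 1 ≤ n)]
          exact hst m h
        · have hmn : m = n := by omega
          simp only [ht', hmn, if_pos (le_refl n), if_neg (by omega : ¬ n + 1 ≤ n)]
          exact hlt
      · simpa only [ht', if_pos (Nat.zero_le n)] using h0
      · simp only [ht', if_neg (by omega : ¬ n + 1 ≤ n)]
    have hagree : ∑ m ∈ Finset.range n, |f (t' (m + 1)) - f (t' m)|
        = ∑ m ∈ Finset.range n, |f (t (m + 1)) - f (t m)| := by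
      apply Finset.sum_congr rfl
      intro m hm
      have hm' := Finset.mem_range.mp hm
      simp only [ht', if_pos (by omega : m ≤ n), if_pos (by omega : m + 1 ≤ n)]
    calc ∑ m ∈ Finset.range n, |f (t (m + 1)) - f (t m)|
        ≤ ∑ m ∈ Finset.range (n + 1), |f (t' (m + 1)) - f (t' m)| := by
          rw [Finset.sum_range_succ, hagree]
          exact le_add_of_nonneg_right (abs_nonneg _)
      _ ≤ totalVar f a b := le_csSup hBV hmem

lemma sum_weak_le (f : ℝ → ℝ) (a b : ℝ) (hab : a < b) (hBV : BddAbove (vSums f a b))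
    (n : ℕ) (t : ℕ → ℝ) (hw : ∀ m < n, t m ≤ t (m + 1)) (h0 : a < t 0) (hn : t n ≤ b) :
    ∑ m ∈ Finset.range n, |f (t (m + 1)) - f (t m)| ≤ totalVar f a b := by
  classical
  have hmono := mono_of_steps t n hw
  set F : ℕ → ℝ := fun m => |f (t (m + 1)) - f (t m)| with hF
  set S : Finset ℕ := (Finset.range n).filter (fun m => t m ≠ t (m + 1)) with hS
  have hsum : ∑ m ∈ Finset.range n, F m = ∑ m ∈ S, F m := by
    rw [hS]
    refine (Finset.sum_filter_of_ne ?_).symm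
    intro m _ hFm
    intro hEq
    apply hFm
    simp only [hF, hEq, sub_self, abs_zero]
  obtain ⟨E, hEmem, hEiff, hEsurj, hEsum⟩ := enum S
  set r := S.card with hr
  rcases Nat.eq_zero_or_pos r with hr0 | hrpos
  · rw [hsum, hEsum F, hr0]
    simpa using totalVar_nonneg f a b hab hBV
  · have hEltn : ∀ l < r, E l < n := by
      intro l hl
      have := hEmem l hl
      rw [hS] at this
      exact Finset.mem_range.mp (Finset.mem_filter.mp this).1
    have hEne : ∀ l < r, t (E l) ≠ t (E l + 1) := by
      intro l hl
      have := hEmem l hl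
      rw [hS] at this
      exact (Finset.mem_filter.mp this).2
    have hEstep : ∀ l < r, t (E l) < t (E l + 1) := fun l hl =>
      lt_of_le_of_ne (hw _ (hEltn l hl)) (hEne l hl)
    -- constancy
    have hconst : ∀ u v : ℕ, u ≤ v → v ≤ n → (∀ m, u ≤ m → m < v → m ∉ S) → t u = t v := by
      intro u v huv hvn hno
      induction v, huv using Nat.le_induction with
      | base => rfl
      | succ v hv ih =>
        have h1 : t u = t v := ih (by omega) (fun m hm hm' => hno m hm (by omega))
        have hvS : v ∉ S := hno v hv (by omega)
        have h2 : t v = t (v + 1) := by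
          by_contra hne2
          exact hvS (by rw [hS]; exact Finset.mem_filter.mpr ⟨Finset.mem_range.mpr (by omega), hne2⟩)
        rw [h1, h2]
    have hkey : ∀ l, l + 1 < r → t (E l + 1) = t (E (l + 1)) := by
      intro l hl
      have hll : E l < E (l + 1) := (hEiff l (l + 1) (by omega) hl).mpr (by omega)
      refine hconst (E l + 1) (E (l + 1)) (by omega) (by have := hEltn (l + 1) hl; omega) ?_
      intro m hm1 hm2 hmS
      obtain ⟨l'', hl'', hEl''⟩ := hEsurj m hmS
      have c1 : E l < E l'' := by omega
      have c2 : E l'' < E (l + 1) := by omega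
      have d1 : l < l'' := (hEiff l l'' (by omega) hl'').mp c1
      have d2 : l'' < l + 1 := (hEiff l'' (l + 1) hl'' hl).mp c2
      omega
    set w : ℕ → ℝ := fun l => if l < r then t (E l) else t (E (r - 1) + 1) with hwdef
    have hwsucc : ∀ l < r, w (l + 1) = t (E l + 1) := by
      intro l hl
      rcases Nat.lt_or_ge (l + 1) r with h | h
      · simp only [hwdef, if_pos h]
        exact (hkey l h).symm
      · have hl1 : l = r - 1 := by omega
        simp only [hwdef, if_neg (by omega : ¬ l + 1 < r)]
        rw [hl1]
    have hwstrict : ∀ l < r, w l < w (l + 1) := by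
      intro l hl
      rw [hwsucc l hl]
      simp only [hwdef, if_pos hl]
      exact hEstep l hl
    have hw0 : a < w 0 := by
      simp only [hwdef, if_pos hrpos]
      exact lt_of_lt_of_le h0 (hmono 0 (E 0) (Nat.zero_le _) (le_of_lt (hEltn 0 hrpos)))
    have hwr : w r ≤ b := by
      simp only [hwdef, if_neg (lt_irrefl r)]
      have h1 : E (r - 1) < n := hEltn (r - 1) (by omega)
      exact le_trans (hmono (E (r - 1) + 1) n (by omega) le_rfl) hn
    have hsum2 : ∑ l ∈ Finset.range r, |f (w (l + 1)) - f (w l)| = ∑ l ∈ Finset.range r, F (E l) := by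
      apply Finset.sum_congr rfl
      intro l hl
      have hl' := Finset.mem_range.mp hl
      rw [hwsucc l hl']
      simp only [hwdef, if_pos hl', hF]
    calc ∑ m ∈ Finset.range n, F m = ∑ l ∈ Finset.range r, F (E l) := by rw [hsum, hEsum]
      _ = ∑ l ∈ Finset.range r, |f (w (l + 1)) - f (w l)| := hsum2.symm
      _ ≤ totalVar f a b := sum_strict_le f a b hBV r w hwstrict hw0 hwr



lemma two_pow_pos (k : ℕ) : (0 : ℝ) < 2 ^ k := by positivity

lemma dyadCell_eq_dCell (k : ℕ) (t : ℝ) : dyadCell k t = dCell k ⌈t * 2 ^ k⌉ := rfl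

lemma self_mem_dyadCell (k : ℕ) (t : ℝ) : t ∈ dyadCell k t := by
  constructor
  · rw [div_lt_iff₀ (two_pow_pos k)]
    have := Int.ceil_lt_add_one (t * 2 ^ k)
    linarith
  · rw [le_div_iff₀ (two_pow_pos k)]
    exact Int.le_ceil _

lemma right_mem_dCell (k : ℕ) (j : ℤ) : ((j : ℝ) / 2 ^ k) ∈ dCell k j := by
  constructor
  · exact (div_lt_div_iff_of_pos_right (two_pow_pos k)).mpr (by linarith)
  · exact le_rfl

lemma ceil_right_endpoint (k : ℕ) (j : ℤ) : ⌈((j : ℝ) / 2 ^ k) * 2 ^ k⌉ = j := by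
  rw [div_mul_cancel₀ _ (ne_of_gt (two_pow_pos k))]
  exact Int.ceil_intCast j

lemma condAvg_congr (μ : Measure ℝ) (f : ℝ → ℝ) (k : ℕ) {s t : ℝ}
    (h : ⌈s * 2 ^ k⌉ = ⌈t * 2 ^ k⌉) : condAvg μ f k s = condAvg μ f k t := by
  unfold condAvg dyadCell
  rw [h]

lemma ceil_bounds (i k : ℕ) (t : ℝ) (ht : t ∈ Ioc (-(i : ℝ)) (i : ℝ)) :
    -(i : ℤ) * 2 ^ k < ⌈t * 2 ^ k⌉ ∧ ⌈t * 2 ^ k⌉ ≤ (i : ℤ) * 2 ^ k := by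
  constructor
  · rw [Int.lt_ceil]
    push_cast
    exact mul_lt_mul_of_pos_right ht.1 (two_pow_pos k)
  · rw [Int.ceil_le]
    push_cast
    exact mul_le_mul_of_nonneg_right ht.2 (le_of_lt (two_pow_pos k))

lemma dCell_subset (i k : ℕ) (j : ℤ) (hj1 : -(i : ℤ) * 2 ^ k < j) (hj2 : j ≤ (i : ℤ) * 2 ^ k) :
    dCell k j ⊆ Ioc (-(i : ℝ)) (i : ℝ) := by
  intro z hz
  constructor
  · refine lt_of_le_of_lt ?_ hz.1
    rw [le_div_iff₀ (two_pow_pos k)]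
    have : (-(i : ℤ) * 2 ^ k : ℤ) + 1 ≤ j := hj1
    have h2 : ((-(i : ℤ) * 2 ^ k : ℤ) : ℝ) + 1 ≤ (j : ℝ) := by exact_mod_cast this
    push_cast at h2 ⊢
    linarith
  · refine le_trans hz.2 ?_
    rw [div_le_iff₀ (two_pow_pos k)]
    have h2 : ((j : ℤ) : ℝ) ≤ (((i : ℤ) * 2 ^ k : ℤ) : ℝ) := by exact_mod_cast hj2
    push_cast at h2 ⊢
    linarith

/-- Lemma E: sum of within-cell differences over strictly increasing cells. -/
lemma cell_sum_le (f : ℝ → ℝ) (a b : ℝ) (hab : a < b) (hBV : BddAbove (vSums f a b))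
    (k : ℕ) (r : ℕ) (c : ℕ → ℤ) (X : ℕ → ℝ)
    (hc : ∀ l, l + 1 < r → c l < c (l + 1))
    (hX : ∀ l < r, X l ∈ dCell k (c l))
    (hsub : ∀ l < r, dCell k (c l) ⊆ Ioc a b) :
    ∑ l ∈ Finset.range r, |f (X l) - f ((c l : ℝ) / 2 ^ k)| ≤ totalVar f a b := by
  classical
  set u : ℕ → ℝ := fun q =>
    if q < 2 * r then (if q % 2 = 0 then X (q / 2) else (c (q / 2) : ℝ) / 2 ^ k) else b with hu
  have hu2l : ∀ l < r, u (2 * l) = X l := by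
    intro l hl
    simp only [hu, if_pos (by omega : 2 * l < 2 * r), if_pos (by omega : 2 * l % 2 = 0)]
    rw [(by omega : 2 * l / 2 = l)]
  have hu2l1 : ∀ l < r, u (2 * l + 1) = (c l : ℝ) / 2 ^ k := by
    intro l hl
    simp only [hu, if_pos (by omega : 2 * l + 1 < 2 * r),
      if_neg (by omega : ¬ (2 * l + 1) % 2 = 0)]
    rw [(by omega : (2 * l + 1) / 2 = l)]
  have hright : ∀ l < r, ((c l : ℝ) / 2 ^ k) ∈ dCell k (c l) :=
    fun l _ => right_mem_dCell k (c l)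
  have hwk : ∀ q < 2 * r, u q ≤ u (q + 1) := by
    intro q hq
    obtain ⟨l, hl⟩ : ∃ l, q = 2 * l ∨ q = 2 * l + 1 := ⟨q / 2, by omega⟩
    rcases hl with rfl | rfl
    · have hlr : l < r := by omega
      rw [hu2l l hlr, (by omega : 2 * l + 1 = 2 * l + 1), hu2l1 l hlr]
      exact (hX l hlr).2
    · have hlr : l < r := by omega
      rw [hu2l1 l hlr]
      rcases Nat.lt_or_ge (2 * l + 1 + 1) (2 * r) with h | h
      · have hl1r : l + 1 < r := by omega
        have : u (2 * l + 1 + 1) = X (l + 1) := by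
          rw [(by omega : 2 * l + 1 + 1 = 2 * (l + 1))]
          exact hu2l (l + 1) hl1r
        rw [this]
        have hcc : c l + 1 ≤ c (l + 1) := hc l hl1r
        have hcast : (c l : ℝ) ≤ (c (l + 1) : ℝ) - 1 := by exact_mod_cast Int.le_sub_one_of_lt (hc l hl1r)
        have hlow : ((c (l + 1) : ℝ) - 1) / 2 ^ k < X (l + 1) := (hX (l + 1) hl1r).1
        refine le_of_lt (lt_of_le_of_lt ?_ hlow)
        exact (div_le_div_iff_of_pos_right (two_pow_pos k)).mpr hcast
      · have : u (2 * l + 1 + 1) = b := by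
          simp only [hu, if_neg (by omega : ¬ 2 * l + 1 + 1 < 2 * r)]
        rw [this]
        exact (hsub l hlr (hright l hlr)).2
  have hu0 : a < u 0 := by
    rcases Nat.eq_zero_or_pos r with hr0 | hrpos
    · simp only [hu, hr0]
      simpa using hab
    · have : u 0 = X 0 := by simpa using hu2l 0 hrpos
      rw [this]
      exact (hsub 0 hrpos (hX 0 hrpos)).1
  have hu2r : u (2 * r) ≤ b := by
    simp only [hu, if_neg (lt_irrefl (2 * r))]
    exact le_rfl
  have hbig := sum_weak_le f a b hab hBV (2 * r) u hwk hu0 hu2r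
  refine le_trans ?_ hbig
  rw [sum_range_two_mul r (fun q => |f (u (q + 1)) - f (u q)|)]
  apply Finset.sum_le_sum
  intro l hl
  have hl' := Finset.mem_range.mp hl
  have e1 : |f (u (2 * l + 1)) - f (u (2 * l))| = |f (X l) - f ((c l : ℝ) / 2 ^ k)| := by
    rw [hu2l l hl', hu2l1 l hl', abs_sub_comm]
  rw [e1]
  exact le_add_of_nonneg_right (abs_nonneg _)

lemma exists_pt (μ : Measure ℝ) [IsProbabilityMeasure μ] (f : ℝ → ℝ) (hInt : Integrable f μ)
    (k : ℕ) (t p : ℝ) (h0 : μ (dyadCell k t) ≠ 0) :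
    ∃ x ∈ dyadCell k t, |condAvg μ f k t - f p| ≤ |f x - f p| := by
  set A := dyadCell k t with hA
  have hfin : μ A ≠ ⊤ := measure_ne_top μ A
  have havg : condAvg μ f k t = ⨍ z in A, f z ∂μ := by
    rw [setAverage_eq, condAvg, smul_eq_mul, div_eq_inv_mul]
    rfl
  rcases le_or_gt (f p) (condAvg μ f k t) with hc | hc
  · obtain ⟨x, hxA, hx⟩ := exists_setAverage_le h0 hfin hInt.integrableOn
    refine ⟨x, hxA, ?_⟩
    rw [havg] at hc ⊢
    rw [abs_of_nonneg (sub_nonneg.2 hc)]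
    have h1 : ⨍ z in A, f z ∂μ - f p ≤ f x - f p := by linarith
    exact le_trans h1 (le_abs_self _)
  · obtain ⟨x, hxA, hx⟩ := exists_le_setAverage h0 hfin hInt.integrableOn
    refine ⟨x, hxA, ?_⟩
    rw [havg] at hc ⊢
    rw [abs_of_nonpos (by linarith)]
    have h1 : -(⨍ z in A, f z ∂μ - f p) ≤ f p - f x := by linarith
    calc -(⨍ z in A, f z ∂μ - f p) ≤ f p - f x := h1
      _ ≤ |f p - f x| := le_abs_self _
      _ = |f x - f p| := abs_sub_comm _ _

end CondAvgAux

/-- If `f` is `μ`-integrable with finite total variation on `(−i,i]`, `k ≥ 1`,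
and every dyadic cell `A ∈ π_k` with `A ⊆ (−i,i]` has `μ(A) > 0`, then the
conditional averaging satisfies `V(f ∘ π_k : −i, i) ≤ 3·V(f : −i, i)`. -/
theorem condAvg_var_le_three_mul
    (μ : Measure ℝ) [IsProbabilityMeasure μ]
    (f : ℝ → ℝ) (hInt : Integrable f μ)
    (i k : ℕ) (hi : 1 ≤ i) (hk : 1 ≤ k)
    (hBV : BddAbove (vSums f (-(i : ℝ)) (i : ℝ)))
    (hcells : ∀ j : ℤ, dCell k j ⊆ Ioc (-(i : ℝ)) (i : ℝ) → 0 < μ (dCell k j)) :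
    BddAbove (vSums (condAvg μ f k) (-(i : ℝ)) (i : ℝ)) ∧
      totalVar (condAvg μ f k) (-(i : ℝ)) (i : ℝ) ≤ 3 * totalVar f (-(i : ℝ)) (i : ℝ) := by
  classical
  have hi1 : (1 : ℝ) ≤ (i : ℝ) := by exact_mod_cast hi
  have hab : -(i : ℝ) < (i : ℝ) := by linarith
  set a : ℝ := -(i : ℝ) with ha
  set b : ℝ := (i : ℝ) with hb
  set g : ℝ → ℝ := condAvg μ f k with hg
  set V : ℝ := totalVar f a b with hV
  have key : ∀ s ∈ vSums g a b, s ≤ 3 * V := by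
    rintro s ⟨n, t, hst, h0, hnb, rfl⟩
    have hw : ∀ m < n, t m ≤ t (m + 1) := fun m hm => le_of_lt (hst m hm)
    have hmono := CondAvgAux.mono_of_steps t n hw
    have htIoc : ∀ m ≤ n, t m ∈ Ioc a b := fun m hm =>
      ⟨lt_of_lt_of_le h0 (hmono 0 m (Nat.zero_le _) hm), hnb ▸ hmono m n hm le_rfl⟩
    set j : ℕ → ℤ := fun m => ⌈t m * 2 ^ k⌉ with hj
    set p : ℕ → ℝ := fun m => (j m : ℝ) / 2 ^ k with hp
    have hjb : ∀ m ≤ n, -(i : ℤ) * 2 ^ k < j m ∧ j m ≤ (i : ℤ) * 2 ^ k := fun m hm =>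
      CondAvgAux.ceil_bounds i k (t m) (htIoc m hm)
    have hcellsub : ∀ m ≤ n, dCell k (j m) ⊆ Ioc a b := fun m hm =>
      CondAvgAux.dCell_subset i k (j m) (hjb m hm).1 (hjb m hm).2
    have hμpos : ∀ m ≤ n, μ (dyadCell k (t m)) ≠ 0 := by
      intro m hm
      rw [CondAvgAux.dyadCell_eq_dCell]
      exact (hcells (j m) (hcellsub m hm)).ne'
    have hxall : ∀ m : ℕ, ∃ x, m ≤ n →
        x ∈ dyadCell k (t m) ∧ |g (t m) - f (p m)| ≤ |f x - f (p m)| := by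
      intro m
      by_cases hm : m ≤ n
      · obtain ⟨x, h1, h2⟩ := CondAvgAux.exists_pt μ f hInt k (t m) (p m) (hμpos m hm)
        exact ⟨x, fun _ => ⟨h1, h2⟩⟩
      · exact ⟨0, fun h => absurd h hm⟩
    choose x hxp using hxall
    have hjmono : ∀ u v, u ≤ v → v ≤ n → j u ≤ j v := fun u v huv hvn =>
      Int.ceil_le_ceil
        (mul_le_mul_of_nonneg_right (hmono u v huv hvn) (le_of_lt (CondAvgAux.two_pow_pos k)))
    have hpn : p n = b := by
      have hjn : j n = (i : ℤ) * 2 ^ k := by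
        show ⌈t n * 2 ^ k⌉ = (i : ℤ) * 2 ^ k
        rw [hnb]
        rw [show ((i : ℝ) * 2 ^ k) = (((i : ℤ) * 2 ^ k : ℤ) : ℝ) by push_cast; ring]
        exact Int.ceil_intCast _
      show ((j n : ℝ)) / 2 ^ k = b
      rw [hjn]
      push_cast
      field_simp
      rfl
    have hp0 : a < p 0 := lt_of_lt_of_le h0 (CondAvgAux.self_mem_dyadCell k (t 0)).2
    have hpmono : ∀ u v, u ≤ v → v ≤ n → p u ≤ p v := by
      intro u v huv hvn
      show ((j u : ℝ)) / 2 ^ k ≤ ((j v : ℝ)) / 2 ^ k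
      have : (j u : ℝ) ≤ (j v : ℝ) := by exact_mod_cast hjmono u v huv hvn
      exact div_le_div_of_nonneg_right this (le_of_lt (CondAvgAux.two_pow_pos k))
    have hterm : ∀ m ∈ Finset.range n,
        |g (t (m + 1)) - g (t m)| ≤
          ((if j m = j (m + 1) then 0 else |f (x (m + 1)) - f (p (m + 1))|)
            + |f (p (m + 1)) - f (p m)|
            + (if j m = j (m + 1) then 0 else |f (x m) - f (p m)|)) := by
      intro m hm
      have hmn := Finset.mem_range.mp hm
      by_cases hjm : j m = j (m + 1)
      · rw [if_pos hjm, if_pos hjm]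
        have hgg : g (t m) = g (t (m + 1)) := CondAvgAux.condAvg_congr μ f k hjm
        rw [← hgg, sub_self, abs_zero]
        have := abs_nonneg (f (p (m + 1)) - f (p m))
        linarith
      · rw [if_neg hjm, if_neg hjm]
        have h1 := (hxp (m + 1) (by omega)).2
        have h2 := (hxp m (by omega)).2
        have htri : |g (t (m + 1)) - g (t m)| ≤
            |g (t (m + 1)) - f (p (m + 1))| + |f (p (m + 1)) - f (p m)|
              + |f (p m) - g (t m)| := by
          have e1 := abs_sub_le (g (t (m + 1))) (f (p (m + 1))) (g (t m))
          have e2 := abs_sub_le (f (p (m + 1))) (f (p m)) (g (t m))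
          linarith
        have h2' : |f (p m) - g (t m)| ≤ |f (x m) - f (p m)| := by
          rw [abs_sub_comm]
          exact h2
        linarith
    have hsplit : ∑ m ∈ Finset.range n, |g (t (m + 1)) - g (t m)| ≤
        (∑ m ∈ Finset.range n, (if j m = j (m + 1) then 0 else |f (x (m + 1)) - f (p (m + 1))|))
          + (∑ m ∈ Finset.range n, |f (p (m + 1)) - f (p m)|)
          + (∑ m ∈ Finset.range n, (if j m = j (m + 1) then 0 else |f (x m) - f (p m)|)) := by
      refine le_trans (Finset.sum_le_sum hterm) ?_
      rw [Finset.sum_add_distrib, Finset.sum_add_distrib]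
    have hS2 : ∑ m ∈ Finset.range n, |f (p (m + 1)) - f (p m)| ≤ V :=
      CondAvgAux.sum_weak_le f a b hab hBV n p
        (fun m hm => hpmono m (m + 1) (by omega) (by omega)) hp0 (le_of_eq hpn)
    set S : Finset ℕ := (Finset.range n).filter (fun m => ¬ j m = j (m + 1)) with hSdef
    have hifsum : ∀ H : ℕ → ℝ,
        ∑ m ∈ Finset.range n, (if j m = j (m + 1) then 0 else H m) = ∑ m ∈ S, H m := by
      intro H
      rw [hSdef, Finset.sum_filter]
      refine Finset.sum_congr rfl ?_
      intro m _
      by_cases h : j m = j (m + 1) <;> simp [h]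
    obtain ⟨E, hEmem, hEiff, hEsurj, hEsum⟩ := CondAvgAux.enum S
    have hES : ∀ l < S.card, E l < n ∧ j (E l) ≠ j (E l + 1) := by
      intro l hl
      have h1 := hEmem l hl
      rw [hSdef] at h1
      have h2 := Finset.mem_filter.mp h1
      exact ⟨Finset.mem_range.mp h2.1, h2.2⟩
    have hEstr : ∀ l, l + 1 < S.card → E l < E (l + 1) := fun l hl =>
      (hEiff l (l + 1) (by omega) hl).mpr (by omega)
    have hjstrict : ∀ l < S.card, j (E l) < j (E l + 1) := fun l hl =>
      lt_of_le_of_ne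
        (hjmono (E l) (E l + 1) (by omega) (by have := (hES l hl).1; omega))
        (hES l hl).2
    have hS3 : ∑ m ∈ S, |f (x m) - f (p m)| ≤ V := by
      rw [hEsum]
      exact CondAvgAux.cell_sum_le f a b hab hBV k S.card
        (fun l => j (E l)) (fun l => x (E l))
        (fun l hl => lt_of_lt_of_le (hjstrict l (by omega))
          (hjmono (E l + 1) (E (l + 1)) (hEstr l hl) (le_of_lt (hES (l + 1) hl).1)))
        (fun l hl => by
          have := (hxp (E l) (le_of_lt (hES l hl).1)).1
          rwa [CondAvgAux.dyadCell_eq_dCell] at this)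
        (fun l hl => hcellsub (E l) (le_of_lt (hES l hl).1))
    have hS1 : ∑ m ∈ S, |f (x (m + 1)) - f (p (m + 1))| ≤ V := by
      rw [hEsum]
      exact CondAvgAux.cell_sum_le f a b hab hBV k S.card
        (fun l => j (E l + 1)) (fun l => x (E l + 1))
        (fun l hl => lt_of_le_of_lt
          (hjmono (E l + 1) (E (l + 1)) (hEstr l hl) (le_of_lt (hES (l + 1) hl).1))
          (hjstrict (l + 1) hl))
        (fun l hl => by
          have := (hxp (E l + 1) (by have := (hES l hl).1; omega)).1
          rwa [CondAvgAux.dyadCell_eq_dCell] at this)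
        (fun l hl => hcellsub (E l + 1) (by have := (hES l hl).1; omega))
    calc ∑ m ∈ Finset.range n, |g (t (m + 1)) - g (t m)|
        ≤ (∑ m ∈ Finset.range n, (if j m = j (m + 1) then 0 else |f (x (m + 1)) - f (p (m + 1))|))
          + (∑ m ∈ Finset.range n, |f (p (m + 1)) - f (p m)|)
          + (∑ m ∈ Finset.range n, (if j m = j (m + 1) then 0 else |f (x m) - f (p m)|)) := hsplit
      _ = (∑ m ∈ S, |f (x (m + 1)) - f (p (m + 1))|)
          + (∑ m ∈ Finset.range n, |f (p (m + 1)) - f (p m)|)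
          + (∑ m ∈ S, |f (x m) - f (p m)|) := by
            rw [hifsum (fun m => |f (x (m + 1)) - f (p (m + 1))|),
              hifsum (fun m => |f (x m) - f (p m)|)]
      _ ≤ V + V + V := add_le_add (add_le_add hS1 hS2) hS3
      _ = 3 * V := by ring
  have hne : (vSums g a b).Nonempty := ⟨0, CondAvgAux.zero_mem_vSums g a b hab⟩
  have hbdd : BddAbove (vSums g a b) := ⟨3 * V, fun s hs => key s hs⟩
  exact ⟨hbdd, csSup_le hne key⟩
end
end

section
/- Let μ be a Borel probability measure on ℝ, let f : ℝ → ℝ be non-decreasing and μ-integrable, let k ≥ 1 and i ≥ 1, and suppose every dyadic cell A ∈ π_k with A ⊆ (−i,i] satisfies μ(A) > 0. Define (f ∘ π_k)(t) = (1/μ(π_k[t])) ∫_{π_k[t]} f dμ. Then f ∘ π_k is non-decreasing on (−i,i] and V(f ∘ π_k : −i, i) ≤ V(f : −i, i). -/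
open MeasureTheory Filter Set

noncomputable section

lemma dyadCell_eq (k : ℕ) (t : ℝ) : dyadCell k t = dCell k ⌈t * 2 ^ k⌉ := rfl

lemma dyadCell_subset {i k : ℕ} {t : ℝ} (ht : t ∈ Ioc (-(i : ℝ)) (i : ℝ)) :
    dyadCell k t ⊆ Ioc (-(i : ℝ)) (i : ℝ) := by
  have h2 : (0:ℝ) < 2 ^ k := by positivity
  apply Ioc_subset_Ioc
  · rw [le_div_iff₀ h2]
    have h : -((i:ℤ) * 2 ^ k) < ⌈t * 2 ^ k⌉ := by
      apply Int.lt_ceil.mpr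
      push_cast
      nlinarith [ht.1]
    have h3 : (-(i * 2 ^ k : ℤ) : ℝ) + 1 ≤ (⌈t * 2 ^ k⌉ : ℝ) := by
      exact_mod_cast Int.add_one_le_iff.mpr h
    push_cast at h3 ⊢
    nlinarith
  · rw [div_le_iff₀ h2]
    have h1 : t * 2 ^ k ≤ ((i * 2 ^ k : ℤ) : ℝ) := by
      push_cast
      nlinarith [ht.2]
    have h : (⌈t * 2 ^ k⌉ : ℝ) ≤ ((i * 2 ^ k : ℤ) : ℝ) := by
      exact_mod_cast Int.ceil_le.mpr h1
    push_cast at h ⊢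
    nlinarith

lemma le_condAvg {μ : Measure ℝ} [IsProbabilityMeasure μ] {f : ℝ → ℝ}
    (hInt : Integrable f μ) {k : ℕ} {t : ℝ} (hμ : 0 < μ (dyadCell k t))
    {c : ℝ} (hc : ∀ z ∈ dyadCell k t, c ≤ f z) : c ≤ condAvg μ f k t := by
  have hms : MeasurableSet (dyadCell k t) := measurableSet_Ioc
  have hfin : μ (dyadCell k t) ≠ ⊤ := measure_ne_top μ _
  have h0 : 0 < (μ (dyadCell k t)).toReal := ENNReal.toReal_pos hμ.ne' hfin
  have hint : ∫ _z in dyadCell k t, c ∂μ ≤ ∫ z in dyadCell k t, f z ∂μ :=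
    setIntegral_mono_on (integrableOn_const (measure_ne_top μ _))
      hInt.integrableOn hms hc
  rw [setIntegral_const, smul_eq_mul] at hint
  rw [show μ.real (dyadCell k t) = (μ (dyadCell k t)).toReal from rfl] at hint
  rw [condAvg, le_div_iff₀ h0]
  nlinarith [hint]

lemma condAvg_le {μ : Measure ℝ} [IsProbabilityMeasure μ] {f : ℝ → ℝ}
    (hInt : Integrable f μ) {k : ℕ} {t : ℝ} (hμ : 0 < μ (dyadCell k t))
    {c : ℝ} (hc : ∀ z ∈ dyadCell k t, f z ≤ c) : condAvg μ f k t ≤ c := by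
  have hms : MeasurableSet (dyadCell k t) := measurableSet_Ioc
  have hfin : μ (dyadCell k t) ≠ ⊤ := measure_ne_top μ _
  have h0 : 0 < (μ (dyadCell k t)).toReal := ENNReal.toReal_pos hμ.ne' hfin
  have hint : ∫ z in dyadCell k t, f z ∂μ ≤ ∫ _z in dyadCell k t, c ∂μ :=
    setIntegral_mono_on hInt.integrableOn
      (integrableOn_const (measure_ne_top μ _)) hms hc
  rw [setIntegral_const, smul_eq_mul] at hint
  rw [show μ.real (dyadCell k t) = (μ (dyadCell k t)).toReal from rfl] at hint
  rw [condAvg, div_le_iff₀ h0]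
  nlinarith [hint]

lemma vsum_eq {g : ℝ → ℝ} {a b : ℝ} (hg : MonotoneOn g (Ioc a b))
    {n : ℕ} {t : ℕ → ℝ} (ht : ∀ i < n, t i < t (i + 1)) (h0 : a < t 0) (hn : t n = b) :
    t 0 ∈ Ioc a b ∧ ∑ i ∈ Finset.range n, |g (t (i + 1)) - g (t i)| = g b - g (t 0) := by
  have hchain : ∀ m' : ℕ, m' ≤ n → ∀ m ≤ m', t m ≤ t m' := by
    intro m'
    induction m' with
    | zero =>
      intro _ m hm
      rw [Nat.le_zero.mp hm]
    | succ p ih =>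
      intro hpn m hm
      rcases Nat.eq_or_lt_of_le hm with h | h
      · rw [h]
      · have hmp : m ≤ p := Nat.lt_succ_iff.mp h
        have h1 : t m ≤ t p := ih (Nat.le_of_succ_le hpn) m hmp
        have h2 : t p < t (p + 1) := ht p (Nat.lt_of_succ_le hpn)
        linarith
  have hmem : ∀ m ≤ n, t m ∈ Ioc a b := by
    intro m hm
    refine ⟨lt_of_lt_of_le h0 (hchain m hm 0 (Nat.zero_le m)), ?_⟩
    have := hchain n le_rfl m hm
    linarith [hn ▸ this]
  refine ⟨hmem 0 (Nat.zero_le n), ?_⟩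
  have hcongr : ∀ m ∈ Finset.range n, |g (t (m + 1)) - g (t m)| = g (t (m + 1)) - g (t m) := by
    intro m hm
    rw [Finset.mem_range] at hm
    exact abs_of_nonneg (sub_nonneg.2 (hg (hmem m hm.le) (hmem (m + 1) hm) (ht m hm).le))
  rw [Finset.sum_congr rfl hcongr, Finset.sum_range_sub (fun m => g (t m)), hn]

/-- If `f` is non-decreasing and `μ`-integrable, `k ≥ 1`, `i ≥ 1`, and every
dyadic cell `A ∈ π_k` with `A ⊆ (−i,i]` has `μ(A) > 0`, then the conditional
averaging `f ∘ π_k` is non-decreasing on `(−i,i]` and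
`V(f ∘ π_k : −i, i) ≤ V(f : −i, i)`. -/
theorem condAvg_monotone_var_le
    (μ : Measure ℝ) [IsProbabilityMeasure μ]
    (f : ℝ → ℝ) (hMono : Monotone f) (hInt : Integrable f μ)
    (i k : ℕ) (hi : 1 ≤ i) (hk : 1 ≤ k)
    (hcells : ∀ j : ℤ, dCell k j ⊆ Ioc (-(i : ℝ)) (i : ℝ) → 0 < μ (dCell k j)) :
    MonotoneOn (condAvg μ f k) (Ioc (-(i : ℝ)) (i : ℝ)) ∧
    BddAbove (vSums (condAvg μ f k) (-(i : ℝ)) (i : ℝ)) ∧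
      totalVar (condAvg μ f k) (-(i : ℝ)) (i : ℝ) ≤ totalVar f (-(i : ℝ)) (i : ℝ) := by
  have hi' : (1:ℝ) ≤ (i:ℝ) := by exact_mod_cast hi
  have hii : -(i:ℝ) < (i:ℝ) := by linarith
  have h2 : (0:ℝ) < 2 ^ k := by positivity
  have hpos : ∀ t ∈ Ioc (-(i:ℝ)) (i:ℝ), 0 < μ (dyadCell k t) := by
    intro t ht
    rw [dyadCell_eq]
    exact hcells _ (by rw [← dyadCell_eq]; exact dyadCell_subset ht)
  -- monotonicity
  have hmonoG : MonotoneOn (condAvg μ f k) (Ioc (-(i:ℝ)) (i:ℝ)) := by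
    intro s hs t ht hst
    have hj : ⌈s * 2 ^ k⌉ ≤ ⌈t * 2 ^ k⌉ := Int.ceil_le_ceil (by nlinarith)
    rcases eq_or_lt_of_le hj with h | h
    · have hcell : dyadCell k s = dyadCell k t := by
        unfold dyadCell; rw [h]
      unfold condAvg
      rw [hcell]
    · have h1 : condAvg μ f k s ≤ f ((⌈s * 2 ^ k⌉ : ℝ) / 2 ^ k) :=
        condAvg_le hInt (hpos s hs) (fun z hz => hMono hz.2)
      have hstep : (⌈s * 2 ^ k⌉ : ℝ) ≤ (⌈t * 2 ^ k⌉ : ℝ) - 1 := by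
        have : ⌈s * 2 ^ k⌉ + 1 ≤ ⌈t * 2 ^ k⌉ := h
        exact_mod_cast Int.le_sub_one_of_lt h
      have h2' : f ((⌈s * 2 ^ k⌉ : ℝ) / 2 ^ k) ≤ f (((⌈t * 2 ^ k⌉ : ℝ) - 1) / 2 ^ k) := by
        apply hMono
        gcongr
      have h3 : f (((⌈t * 2 ^ k⌉ : ℝ) - 1) / 2 ^ k) ≤ condAvg μ f k t :=
        le_condAvg hInt (hpos t ht) (fun z hz => hMono hz.1.le)
      linarith
  -- variation bound
  have hwitF : (0:ℝ) ∈ vSums f (-(i:ℝ)) (i:ℝ) :=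
    ⟨0, fun _ => (i:ℝ), fun m hm => absurd hm (Nat.not_lt_zero m), hii, rfl, by simp⟩
  have hbddF : BddAbove (vSums f (-(i:ℝ)) (i:ℝ)) := by
    refine ⟨f (i:ℝ) - f (-(i:ℝ)), ?_⟩
    rintro s ⟨n, t, ht, h0, hn, rfl⟩
    obtain ⟨ht0, heq⟩ := vsum_eq (hMono.monotoneOn _) ht h0 hn
    rw [heq]
    have := hMono ht0.1.le
    linarith
  have hVf0 : 0 ≤ totalVar f (-(i:ℝ)) (i:ℝ) := le_csSup hbddF hwitF
  have hlow : ∀ t ∈ Ioc (-(i:ℝ)) (i:ℝ),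
      f (i:ℝ) - totalVar f (-(i:ℝ)) (i:ℝ) ≤ condAvg μ f k t := by
    intro t ht
    apply le_condAvg hInt (hpos t ht)
    intro z hz
    have hz' := dyadCell_subset ht hz
    rcases eq_or_lt_of_le hz'.2 with h | h
    · rw [h]; linarith
    · have hmem : |f (i:ℝ) - f z| ∈ vSums f (-(i:ℝ)) (i:ℝ) := by
        refine ⟨1, fun m => if m = 0 then z else (i:ℝ), ?_, ?_, ?_, ?_⟩
        · intro m hm
          interval_cases m
          simpa using h
        · simpa using hz'.1
        · simp
        · simp
      have hle : |f (i:ℝ) - f z| ≤ totalVar f (-(i:ℝ)) (i:ℝ) := le_csSup hbddF hmem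
      have habs : f z ≤ f (i:ℝ) := hMono h.le
      rw [abs_of_nonneg (by linarith)] at hle
      linarith
  have hupi : condAvg μ f k (i:ℝ) ≤ f (i:ℝ) := by
    apply condAvg_le hInt (hpos _ ⟨hii, le_rfl⟩)
    intro z hz
    exact hMono (dyadCell_subset ⟨hii, le_rfl⟩ hz).2
  have hbddG : ∀ s ∈ vSums (condAvg μ f k) (-(i:ℝ)) (i:ℝ), s ≤ totalVar f (-(i:ℝ)) (i:ℝ) := by
    rintro s ⟨n, t, ht, h0, hn, rfl⟩
    obtain ⟨ht0, heq⟩ := vsum_eq hmonoG ht h0 hn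
    rw [heq]
    have := hlow (t 0) ht0
    linarith
  have hwitG : (0:ℝ) ∈ vSums (condAvg μ f k) (-(i:ℝ)) (i:ℝ) :=
    ⟨0, fun _ => (i:ℝ), fun m hm => absurd hm (Nat.not_lt_zero m), hii, rfl, by simp⟩
  exact ⟨hmonoG, ⟨_, hbddG⟩, csSup_le ⟨0, hwitG⟩ hbddG⟩
end
end

section
/- Let μ be a Borel probability measure on ℝ, let T, K ≥ 1 be integers, let ε > 0, and let g : ℝ → ℝ have finite total variation V(g:−T,T) on (−T,T]. Suppose that for every cell A ∈ π_K with A ⊆ (−T,T] and μ(A) > 0 one has |∫_A g dμ| / μ(A) ≤ ε/2. Let ℋ = { A ∈ π_K : A ⊆ (−T,T], μ(A) > 0, and there exists t ∈ A with |g(t)| > ε }. Then (ε/2)·|ℋ| ≤ V(g:−T,T); in particular |ℋ| ≤ 2·V(g:−T,T)/ε. -/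
open MeasureTheory Filter Set

noncomputable section

/-- The set `ℋ` of (indices of) cells `A ∈ π_K` with `A ⊆ (−T,T]`, `μ(A) > 0`,
on which `|g|` exceeds `ε` somewhere. -/
def badCells (μ : Measure ℝ) (g : ℝ → ℝ) (K : ℕ) (T : ℕ) (ε : ℝ) : Set ℤ :=
  { j | dCell K j ⊆ Ioc (-(T : ℝ)) (T : ℝ) ∧ 0 < μ (dCell K j) ∧
        ∃ t ∈ dCell K j, ε < |g t| }

lemma totalVar_nonneg (g : ℝ → ℝ) (a b : ℝ) (hab : a < b) (hBV : BddAbove (vSums g a b)) :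
    0 ≤ totalVar g a b :=
  le_csSup hBV ⟨0, fun _ => b, by intro i hi; omega, hab, rfl, by simp⟩

lemma sum_le_totalVar (g : ℝ → ℝ) (a b : ℝ) (hBV : BddAbove (vSums g a b))
    (n : ℕ) (p : ℕ → ℝ) (hmono : ∀ i < n, p i < p (i + 1)) (h0 : a < p 0) (hn : p n ≤ b) :
    ∑ i ∈ Finset.range n, |g (p (i + 1)) - g (p i)| ≤ totalVar g a b := by
  rcases eq_or_lt_of_le hn with heq | hlt
  · exact le_csSup hBV ⟨n, p, hmono, h0, heq, rfl⟩
  · set q : ℕ → ℝ := fun i => if i < n + 1 then p i else b with hq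
    have hmem : (∑ i ∈ Finset.range (n+1), |g (q (i + 1)) - g (q i)|) ∈ vSums g a b := by
      refine ⟨n + 1, q, ?_, ?_, ?_, rfl⟩
      · intro i hi
        rcases Nat.lt_or_ge i n with h | h
        · simp only [hq]; rw [if_pos (by omega), if_pos (by omega)]; exact hmono i h
        · have : i = n := by omega
          subst this
          simp only [hq]; rw [if_pos (by omega), if_neg (by omega)]; exact hlt
      · simp only [hq]; rw [if_pos (by omega)]; exact h0
      · simp only [hq]; rw [if_neg (by omega)]
    calc ∑ i ∈ Finset.range n, |g (p (i + 1)) - g (p i)|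
        ≤ ∑ i ∈ Finset.range (n+1), |g (q (i + 1)) - g (q i)| := by
          rw [Finset.sum_range_succ]
          have he : ∀ i ∈ Finset.range n, |g (p (i+1)) - g (p i)| = |g (q (i+1)) - g (q i)| := by
            intro i hi; simp only [Finset.mem_range] at hi
            simp only [hq]; rw [if_pos (by omega), if_pos (by omega)]
          rw [Finset.sum_congr rfl he]
          exact le_add_of_nonneg_right (abs_nonneg _)
      _ ≤ totalVar g a b := le_csSup hBV hmem

lemma mono_sum_le (g : ℝ → ℝ) (a b : ℝ) (hab : a < b) (hBV : BddAbove (vSums g a b)) :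
    ∀ n, ∀ u : ℕ → ℝ, Monotone u → (∀ i, u i ∈ Ioc a b) →
      ∑ i ∈ Finset.range n, |g (u (i + 1)) - g (u i)| ≤ totalVar g a b := by
  intro n
  induction n with
  | zero => intro u _ _; simpa using totalVar_nonneg g a b hab hBV
  | succ n ih =>
    intro u hu hus
    by_cases hstrict : ∀ i < n + 1, u i < u (i + 1)
    · exact sum_le_totalVar g a b hBV (n+1) u hstrict (hus 0).1 (hus (n+1)).2
    · push_neg at hstrict
      obtain ⟨i, hi, hieq⟩ := hstrict
      have hieq' : u i = u (i + 1) := le_antisymm (hu (Nat.le_succ i)) hieq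
      set v : ℕ → ℝ := fun k => if k ≤ i then u k else u (k + 1) with hv
      have hvm : Monotone v := by
        intro x y hxy
        simp only [hv]
        split_ifs with h1 h2 h2
        · exact hu hxy
        · exact hu (by omega)
        · exact absurd (le_trans hxy h2) h1
        · exact hu (by omega)
      have hvs : ∀ k, v k ∈ Ioc a b := by
        intro k; simp only [hv]; split_ifs <;> apply hus
      have hterm : ∀ k, |g (v (k + 1)) - g (v k)| =
          if k < i then |g (u (k + 1)) - g (u k)| else |g (u (k + 2)) - g (u (k + 1))| := by
        intro k
        rcases lt_trichotomy k i with h | h | h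
        · rw [if_pos h]; simp only [hv]; rw [if_pos (by omega), if_pos (by omega)]
        · subst h; rw [if_neg (lt_irrefl _)]; simp only [hv]
          rw [if_pos le_rfl, if_neg (by omega), hieq']
        · rw [if_neg (by omega)]; simp only [hv]
          rw [if_neg (by omega), if_neg (by omega)]
      have key : ∑ k ∈ Finset.range (n+1), |g (u (k + 1)) - g (u k)|
          = ∑ k ∈ Finset.range n, |g (v (k + 1)) - g (v k)| := by
        have hin : i ≤ n := by omega
        have hL : ∑ k ∈ Finset.range (n+1), |g (u (k + 1)) - g (u k)|
            = (∑ k ∈ Finset.range i, |g (u (k + 1)) - g (u k)|)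
              + ∑ k ∈ Finset.Ico (i+1) (n+1), |g (u (k + 1)) - g (u k)| := by
          rw [← Finset.sum_range_add_sum_Ico _ (by omega : i ≤ n + 1)]
          rw [Finset.sum_eq_sum_Ico_succ_bot (by omega : i < n + 1)]
          have h0 : |g (u (i + 1)) - g (u i)| = 0 := by rw [hieq']; simp
          rw [h0, zero_add]
        have hR : ∑ k ∈ Finset.range n, |g (v (k + 1)) - g (v k)|
            = (∑ k ∈ Finset.range i, |g (u (k + 1)) - g (u k)|)
              + ∑ k ∈ Finset.Ico (i+1) (n+1), |g (u (k + 1)) - g (u k)| := by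
          rw [← Finset.sum_range_add_sum_Ico _ hin]
          congr 1
          · apply Finset.sum_congr rfl
            intro k hk
            rw [Finset.mem_range] at hk
            rw [hterm k, if_pos hk]
          · rw [Finset.sum_Ico_eq_sum_range, Finset.sum_Ico_eq_sum_range]
            rw [show n + 1 - (i + 1) = n - i by omega]
            apply Finset.sum_congr rfl
            intro k _
            rw [hterm (i + k), if_neg (by omega), show i + 1 + k = i + k + 1 by omega]
        rw [hL, hR]
      rw [key]; exact ih v hvm hvs

lemma bv_of_bddAbove (g : ℝ → ℝ) (a b : ℝ) (hab : a < b) (hBV : BddAbove (vSums g a b)) :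
    BoundedVariationOn g (Ioc a b) := by
  have hle : eVariationOn g (Ioc a b) ≤ ENNReal.ofReal (totalVar g a b) := by
    refine iSup_le ?_
    rintro ⟨n, u, hu, hus⟩
    have h1 := mono_sum_le g a b hab hBV n u hu hus
    calc (∑ i ∈ Finset.range n, edist (g (u (i+1))) (g (u i)))
        = ENNReal.ofReal (∑ i ∈ Finset.range n, |g (u (i+1)) - g (u i)|) := by
          rw [ENNReal.ofReal_sum_of_nonneg (fun i _ => abs_nonneg _)]
          exact Finset.sum_congr rfl fun i _ => by rw [edist_dist, Real.dist_eq]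
      _ ≤ ENNReal.ofReal (totalVar g a b) := ENNReal.ofReal_le_ofReal h1
  exact fun h => (by rw [h] at hle; exact hle : ⊤ ≤ ENNReal.ofReal (totalVar g a b)).not_gt ENNReal.ofReal_lt_top

lemma abs_bound_of_bddAbove (g : ℝ → ℝ) (a b : ℝ) (hab : a < b) (hBV : BddAbove (vSums g a b)) :
    ∀ x ∈ Ioc a b, |g x| ≤ |g b| + totalVar g a b := by
  intro x hx
  rcases eq_or_lt_of_le hx.2 with heq | hlt
  · rw [heq]
    have h0 := totalVar_nonneg g a b hab hBV
    linarith
  · have h1 : |g b - g x| ≤ totalVar g a b := by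
      have h2 := sum_le_totalVar g a b hBV 1 (fun k => if k = 0 then x else b)
        (fun i hi => by
          have : i = 0 := by omega
          subst this
          simp only [if_pos rfl, if_neg (by omega : ¬ (0:ℕ) + 1 = 0)]
          exact hlt)
        (by simp only [if_pos rfl]; exact hx.1)
        (by simp only [if_neg (by omega : ¬ (1:ℕ) = 0)]; exact le_rfl)
      simpa using h2
    have := abs_sub_abs_le_abs_sub (g x) (g b)
    rw [abs_sub_comm] at this
    linarith

lemma integrableOn_of_bddAbove (μ : Measure ℝ) [IsFiniteMeasure μ] (g : ℝ → ℝ) (a b : ℝ)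
    (hab : a < b) (hBV : BddAbove (vSums g a b)) : IntegrableOn g (Ioc a b) μ := by
  have hbv := (bv_of_bddAbove g a b hab hBV).locallyBoundedVariationOn
  have hbm : b ∈ Ioc a b := ⟨hab, le_rfl⟩
  have h1 : MonotoneOn (variationOnFromTo g (Ioc a b) b) (Ioc a b) :=
    variationOnFromTo.monotoneOn hbv hbm
  have h2 : MonotoneOn (variationOnFromTo g (Ioc a b) b - g) (Ioc a b) :=
    variationOnFromTo.sub_self_monotoneOn hbv hbm
  have hmeas : MeasurableSet (Ioc a b) := measurableSet_Ioc
  have ha1 := aemeasurable_restrict_of_monotoneOn (μ := μ) hmeas h1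
  have ha2 := aemeasurable_restrict_of_monotoneOn (μ := μ) hmeas h2
  have hag : AEMeasurable g (μ.restrict (Ioc a b)) := by
    have hgg : g = variationOnFromTo g (Ioc a b) b - (variationOnFromTo g (Ioc a b) b - g) := by
      ext x; simp
    rw [hgg]; exact ha1.sub ha2
  refine ⟨hag.aestronglyMeasurable, ?_⟩
  apply HasFiniteIntegral.of_bounded (C := |g b| + totalVar g a b)
  filter_upwards [ae_restrict_mem hmeas] with x hx
  simpa [Real.norm_eq_abs] using abs_bound_of_bddAbove g a b hab hBV x hx

lemma cell_no_small_false (μ : Measure ℝ) (A : Set ℝ) (hA : MeasurableSet A) (hApos : 0 < μ A)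
    (hAfin : μ A ≠ ⊤) (g : ℝ → ℝ) (hint : IntegrableOn g A μ) (ε : ℝ) (hε : 0 < ε)
    (hsmall : |∫ z in A, g z ∂μ| / (μ A).toReal ≤ ε / 2)
    (t : ℝ) (ht : t ∈ A) (htb : ε < g t)
    (hcon : ∀ s ∈ A, |g t - g s| < ε / 2) : False := by
  have hμr : 0 < (μ A).toReal := ENNReal.toReal_pos hApos.ne' hAfin
  have hgs : ∀ s ∈ A, ε / 2 < g s := by
    intro s hs
    have h := abs_lt.mp (hcon s hs)
    linarith [h.1, h.2]
  have hconst : IntegrableOn (fun _ : ℝ => ε / 2) A μ :=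
    integrableOn_const hAfin
  have hintf : IntegrableOn (fun z => g z - ε / 2) A μ := hint.sub hconst
  have h0 : 0 ≤ᵐ[μ.restrict A] fun z => g z - ε / 2 := by
    filter_upwards [ae_restrict_mem hA] with x hx
    have := hgs x hx; simp; linarith
  have hpos : 0 < ∫ z in A, (g z - ε / 2) ∂μ := by
    rw [setIntegral_pos_iff_support_of_nonneg_ae h0 hintf]
    refine lt_of_lt_of_le hApos (measure_mono ?_)
    intro z hz
    exact ⟨by simp [Function.support]; intro h; nlinarith [hgs z hz], hz⟩
  rw [integral_sub hint hconst, setIntegral_const] at hpos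
  have hineq : ε / 2 * (μ A).toReal < ∫ z in A, g z ∂μ := by
    simp only [smul_eq_mul, measureReal_def] at hpos; linarith
  have habs : |∫ z in A, g z ∂μ| ≤ ε / 2 * (μ A).toReal := (div_le_iff₀ hμr).mp hsmall
  linarith [le_abs_self (∫ z in A, g z ∂μ)]

lemma exists_osc (μ : Measure ℝ) (A : Set ℝ) (hA : MeasurableSet A) (hApos : 0 < μ A)
    (hAfin : μ A ≠ ⊤) (g : ℝ → ℝ) (hint : IntegrableOn g A μ) (ε : ℝ) (hε : 0 < ε)
    (hsmall : |∫ z in A, g z ∂μ| / (μ A).toReal ≤ ε / 2)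
    (t : ℝ) (ht : t ∈ A) (htb : ε < |g t|) :
    ∃ s ∈ A, ε / 2 ≤ |g t - g s| := by
  by_contra hcon
  push_neg at hcon
  rcases lt_abs.mp htb with h | h
  · exact cell_no_small_false μ A hA hApos hAfin g hint ε hε hsmall t ht h hcon
  · refine cell_no_small_false μ A hA hApos hAfin (fun z => -g z) hint.neg ε hε ?_ t ht h ?_
    · rw [integral_neg, abs_neg]; exact hsmall
    · intro s hs
      have := hcon s hs
      rw [show -g t - -g s = -(g t - g s) by ring, abs_neg]; exact this

/-- **Cell-counting lemma.** If `g` has finite total variation on `(−T,T]` and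
`|∫_A g dμ| / μ(A) ≤ ε/2` on every positive-mass cell `A ∈ π_K` inside
`(−T,T]`, then the family `ℋ` of cells on which `|g|` exceeds `ε` somewhere
satisfies `(ε/2)·|ℋ| ≤ V(g:−T,T)`; in particular `|ℋ| ≤ 2·V(g:−T,T)/ε`. -/
theorem badCells_card_le
    (μ : Measure ℝ) [IsProbabilityMeasure μ]
    (T K : ℕ) (hT : 1 ≤ T) (hK : 1 ≤ K)
    (ε : ℝ) (hε : 0 < ε)
    (g : ℝ → ℝ) (hBV : BddAbove (vSums g (-(T : ℝ)) (T : ℝ)))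
    (hsmall : ∀ j : ℤ, dCell K j ⊆ Ioc (-(T : ℝ)) (T : ℝ) → 0 < μ (dCell K j) →
      |∫ z in dCell K j, g z ∂μ| / (μ (dCell K j)).toReal ≤ ε / 2) :
    (badCells μ g K T ε).Finite ∧
      ε / 2 * ((badCells μ g K T ε).ncard : ℝ) ≤ totalVar g (-(T : ℝ)) (T : ℝ) ∧
      ((badCells μ g K T ε).ncard : ℝ) ≤ 2 * totalVar g (-(T : ℝ)) (T : ℝ) / ε := by
  have hT1 : (1 : ℝ) ≤ T := by exact_mod_cast hT
  have hab : -(T : ℝ) < (T : ℝ) := by linarith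
  have hV0 : 0 ≤ totalVar g (-(T : ℝ)) (T : ℝ) := totalVar_nonneg _ _ _ hab hBV
  have h2K : (0 : ℝ) < 2 ^ K := by positivity
  have hIoc : IntegrableOn g (Ioc (-(T : ℝ)) (T : ℝ)) μ :=
    integrableOn_of_bddAbove μ g _ _ hab hBV
  have hex : ∀ j : ℤ, ∃ u v : ℝ, u ∈ dCell K j ∧ v ∈ dCell K j ∧ u < v ∧
      (j ∈ badCells μ g K T ε → ε / 2 ≤ |g v - g u|) := by
    intro j
    by_cases hj : j ∈ badCells μ g K T ε
    · obtain ⟨hsub, hpos, t, htmem, htb⟩ := hj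
      have hint : IntegrableOn g (dCell K j) μ := hIoc.mono_set hsub
      have hAfin : μ (dCell K j) ≠ ⊤ := (measure_lt_top μ _).ne
      obtain ⟨s, hs, hts⟩ := exists_osc μ (dCell K j) measurableSet_Ioc hpos hAfin g hint ε hε
        (hsmall j hsub hpos) t htmem htb
      have hne : t ≠ s := by
        intro h; rw [h, sub_self, abs_zero] at hts; linarith
      rcases hne.lt_or_gt with h | h
      · exact ⟨t, s, htmem, hs, h, fun _ => by rwa [abs_sub_comm] at hts⟩
      · exact ⟨s, t, hs, htmem, h, fun _ => hts⟩
    · refine ⟨((j : ℝ) - 2⁻¹) / 2 ^ K, (j : ℝ) / 2 ^ K, ?_, ?_, ?_, fun h => absurd h hj⟩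
      · exact ⟨(div_lt_div_iff_of_pos_right h2K).mpr (by norm_num),
          (div_le_div_iff_of_pos_right h2K).mpr (by norm_num)⟩
      · exact ⟨(div_lt_div_iff_of_pos_right h2K).mpr (by norm_num), le_rfl⟩
      · exact (div_lt_div_iff_of_pos_right h2K).mpr (by norm_num)
  choose uu vv huu hvv huv hgap using hex
  have huu' : ∀ j : ℤ, ((j : ℝ) - 1) / 2 ^ K < uu j ∧ uu j ≤ (j : ℝ) / 2 ^ K := by
    intro j; have := huu j; rwa [dCell, Set.mem_Ioc] at this
  have hvv' : ∀ j : ℤ, ((j : ℝ) - 1) / 2 ^ K < vv j ∧ vv j ≤ (j : ℝ) / 2 ^ K := by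
    intro j; have := hvv j; rwa [dCell, Set.mem_Ioc] at this
  have crosscell : ∀ j j' : ℤ, j < j' → vv j < uu j' := by
    intro j j' hjj
    have h1 : vv j ≤ (j : ℝ) / 2 ^ K := (hvv' j).2
    have h2 : ((j' : ℝ) - 1) / 2 ^ K < uu j' := (huu' j').1
    have h3 : (j : ℝ) ≤ (j' : ℝ) - 1 := by
      have : (j : ℝ) + 1 ≤ (j' : ℝ) := by exact_mod_cast hjj
      linarith
    have h4 : (j : ℝ) / 2 ^ K ≤ ((j' : ℝ) - 1) / 2 ^ K := by gcongr
    linarith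
  have main : ∀ S : Finset ℤ, ↑S ⊆ badCells μ g K T ε →
      ε / 2 * (S.card : ℝ) ≤ totalVar g (-(T : ℝ)) (T : ℝ) := by
    intro S hS
    rcases Nat.eq_zero_or_pos S.card with h0 | hm
    · rw [h0]; simpa using hV0
    set m := S.card with hmdef
    set e := S.orderEmbOfFin hmdef.symm with hedef
    set E : ℕ → ℤ := fun i => e ⟨min i (m - 1), by omega⟩ with hEdef
    have hES : ∀ i, E i ∈ S := fun i => S.orderEmbOfFin_mem hmdef.symm _
    have hEbad : ∀ i, E i ∈ badCells μ g K T ε := fun i => hS (hES i)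
    have hEmono : ∀ i k, i < k → k ≤ m - 1 → E i < E k := by
      intro i k hik hk
      apply e.strictMono
      exact Fin.mk_lt_mk.mpr (by omega)
    set p : ℕ → ℝ := fun k => if k % 2 = 0 then uu (E (k / 2)) else vv (E (k / 2)) with hpdef
    have hstrict : ∀ k < 2 * m - 1, p k < p (k + 1) := by
      intro k hk
      rcases Nat.mod_two_eq_zero_or_one k with hk2 | hk2
      · have e1 : (k + 1) % 2 = 1 := by omega
        have e2 : (k + 1) / 2 = k / 2 := by omega
        simp only [hpdef]
        rw [if_pos hk2, if_neg (by omega), e2]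
        exact huv _
      · have e1 : (k + 1) % 2 = 0 := by omega
        have e2 : (k + 1) / 2 = k / 2 + 1 := by omega
        simp only [hpdef]
        rw [if_neg (by omega), if_pos e1, e2]
        exact crosscell _ _ (hEmono (k / 2) (k / 2 + 1) (by omega) (by omega))
    have hp0 : -(T : ℝ) < p 0 := by
      have hp00 : p 0 = uu (E 0) := by simp [hpdef]
      rw [hp00]
      exact ((hEbad 0).1 (huu _)).1
    have hpn : p (2 * m - 1) ≤ (T : ℝ) := by
      simp only [hpdef]
      rw [if_neg (show ¬ (2 * m - 1) % 2 = 0 by omega)]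
      exact ((hEbad _).1 (hvv _)).2
    have hsum := sum_le_totalVar g (-(T : ℝ)) (T : ℝ) hBV (2 * m - 1) p hstrict hp0 hpn
    have hlow : ∀ i ∈ Finset.range m, ε / 2 ≤ |g (p (2 * i + 1)) - g (p (2 * i))| := by
      intro i hi
      rw [Finset.mem_range] at hi
      have e1 : (2 * i) % 2 = 0 := by omega
      have e2 : (2 * i) / 2 = i := by omega
      have e3 : (2 * i + 1) % 2 = 1 := by omega
      have e4 : (2 * i + 1) / 2 = i := by omega
      simp only [hpdef]
      rw [if_pos e1, if_neg (by omega), e2, e4]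
      exact hgap (E i) (hEbad i)
    have himg : ∑ i ∈ Finset.range m, |g (p (2 * i + 1)) - g (p (2 * i))|
        ≤ ∑ k ∈ Finset.range (2 * m - 1), |g (p (k + 1)) - g (p k)| := by
      have heq : ∑ i ∈ Finset.range m, |g (p (2 * i + 1)) - g (p (2 * i))|
          = ∑ k ∈ (Finset.range m).image (fun i => 2 * i), |g (p (k + 1)) - g (p k)| :=
        (Finset.sum_image (f := fun k => |g (p (k + 1)) - g (p k)|) (g := fun i : ℕ => 2 * i)
          (by intro x _ y _ h; dsimp only at h; omega)).symm
      rw [heq]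
      apply Finset.sum_le_sum_of_subset_of_nonneg
      · intro k hk
        simp only [Finset.mem_image, Finset.mem_range] at hk ⊢
        obtain ⟨i, hi, rfl⟩ := hk
        omega
      · intro _ _ _; exact abs_nonneg _
    have hcount : ε / 2 * (m : ℝ) ≤ ∑ i ∈ Finset.range m, |g (p (2 * i + 1)) - g (p (2 * i))| := by
      calc ε / 2 * (m : ℝ) = ∑ _i ∈ Finset.range m, ε / 2 := by
            rw [Finset.sum_const, Finset.card_range, nsmul_eq_mul]; ring
        _ ≤ _ := Finset.sum_le_sum hlow
    linarith
  have hfin : (badCells μ g K T ε).Finite := by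
    by_contra hinf
    have hinf' : (badCells μ g K T ε).Infinite := hinf
    obtain ⟨S, hSsub, hScard⟩ :=
      hinf'.exists_subset_card_eq (⌈totalVar g (-(T : ℝ)) (T : ℝ) / (ε / 2)⌉₊ + 1)
    have h1 := main S hSsub
    rw [hScard] at h1
    have hε2 : (0 : ℝ) < ε / 2 := by linarith
    have h2 : totalVar g (-(T : ℝ)) (T : ℝ) / (ε / 2)
        ≤ (⌈totalVar g (-(T : ℝ)) (T : ℝ) / (ε / 2)⌉₊ : ℝ) := Nat.le_ceil _
    rw [div_le_iff₀ hε2] at h2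
    push_cast at h1
    nlinarith
  have hmain2 := main hfin.toFinset (by rw [Set.Finite.coe_toFinset])
  rw [← Set.ncard_eq_toFinset_card _ hfin] at hmain2
  refine ⟨hfin, hmain2, ?_⟩
  rw [le_div_iff₀ hε]
  linarith
end
end
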